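/- arXiv:1502.07674 — 10 statements merged into one kernel-verified Lean document; each statement's English description precedes it below -/
import Mathlib

section
/- For a plane permutation p = (s, π) on [n], where s is an n-cycle and D_p = s ∘ π⁻¹ is its diagonal, the number of exceedances of p equals the number of anti-exceedances of D_p minus 1. (Here s_i is an exceedance of p if s_i <_s π(s_i), and an anti-exceedance of D_p if s_i ≥_s D_p(s_i), where <_s is the linear order induced by listing the cycle s starting from a fixed element s_0.) -/
/-- The plane permutation `(s, π)` determined by the listing `f`
(`s_i = f i`), where `s = f * finRotate n * f⁻¹`.  An index `i` is an
exceedance of `p` if `s_i <_s π (s_i)`, i.e. `i < f.symm (π (f i))`;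
an index `i` is an anti-exceedance of the diagonal `D = s * π⁻¹` if
`s_i ≥_s D (s_i)`, i.e. `f.symm (D (f i)) ≤ i`. -/
theorem exceedance_eq_antiexceedance_diag_sub_one
    (n : ℕ) (hn : 0 < n) (f π : Equiv.Perm (Fin n)) :
    (Finset.univ.filter
        (fun i : Fin n => i < f.symm (π (f i)))).card + 1 =
    (Finset.univ.filter
        (fun i : Fin n =>
          f.symm (((f * finRotate n * f⁻¹) * π⁻¹) (f i)) ≤ i)).card := by
  obtain ⟨m, rfl⟩ : ∃ m, n = m + 1 := ⟨n - 1, (Nat.succ_pred_eq_of_pos hn).symm⟩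
  set g : Equiv.Perm (Fin (m+1)) := f.trans (π.trans f.symm) with hg
  have hgdef : ∀ i, g i = f.symm (π (f i)) := fun i => rfl
  have hgsymm : ∀ i, g.symm i = f.symm (π.symm (f i)) := by
    intro i
    apply g.injective
    rw [Equiv.apply_symm_apply, hgdef]
    simp
  -- rewrite the RHS predicate
  have hpred : ∀ i : Fin (m+1),
      (f.symm (((f * finRotate (m+1) * f⁻¹) * π⁻¹) (f i)) ≤ i) ↔
      (finRotate (m+1) (g.symm i) ≤ i) := by
    intro i
    simp [Equiv.Perm.mul_apply, hgsymm, Equiv.Perm.inv_def]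
  have hR : (Finset.univ.filter
        (fun i : Fin (m+1) =>
          f.symm (((f * finRotate (m+1) * f⁻¹) * π⁻¹) (f i)) ≤ i))
      = (Finset.univ.filter (fun i : Fin (m+1) => finRotate (m+1) (g.symm i) ≤ i)) :=
    Finset.filter_congr (fun i _ => by rw [hpred i])
  rw [hR]
  -- reindex via g
  have hre : (Finset.univ.filter (fun i : Fin (m+1) => finRotate (m+1) (g.symm i) ≤ i)).card
      = (Finset.univ.filter (fun j : Fin (m+1) => finRotate (m+1) j ≤ g j)).card := by
    apply Finset.card_bij' (fun i _ => g.symm i) (fun j _ => g j)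
    · intro i hi
      simp only [Finset.mem_filter, Finset.mem_univ, true_and] at hi ⊢
      simpa using hi
    · intro j hj
      simp only [Finset.mem_filter, Finset.mem_univ, true_and] at hj ⊢
      simpa using hj
    · intro i _; simp
    · intro j _; simp
  rw [hre]
  -- split off the last element
  have hset : (Finset.univ.filter (fun j : Fin (m+1) => finRotate (m+1) j ≤ g j))
      = insert (Fin.last m) (Finset.univ.filter (fun j : Fin (m+1) => j < g j)) := by
    ext j
    simp only [Finset.mem_filter, Finset.mem_univ, true_and, Finset.mem_insert]
    constructor
    · intro h
      rcases eq_or_ne j (Fin.last m) with hj | hj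
      · exact Or.inl hj
      · right
        have hlt : (j : ℕ) < m := Fin.val_lt_last hj
        rw [finRotate_succ_apply] at h
        have : ((j + 1 : Fin (m+1)) : ℕ) = (j : ℕ) + 1 := Fin.val_add_one_of_lt hlt
        have := h
        rw [Fin.le_def, Fin.val_add_one_of_lt hlt] at this
        exact Fin.lt_def.2 (lt_of_lt_of_le (Nat.lt_succ_self _) this)
    · intro h
      rcases h with hj | hj
      · subst hj
        rw [finRotate_succ_apply, Fin.last_add_one]
        exact Fin.zero_le _
      · have hlt : (j : ℕ) < m := by
          by_contra hc
          have : j = Fin.last m := Fin.eq_last_of_not_lt (by omega)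
          subst this
          exact absurd hj (not_lt.2 (Fin.le_last _))
        rw [finRotate_succ_apply, Fin.le_def, Fin.val_add_one_of_lt hlt]
        exact Fin.lt_def.1 hj
  rw [hset, Finset.card_insert_of_notMem]
  · have heq : (Finset.univ.filter (fun i : Fin (m+1) => i < f.symm (π (f i))))
        = (Finset.univ.filter (fun j : Fin (m+1) => j < g j)) := by
      apply Finset.filter_congr
      intro i _
      simp [hgdef]
    rw [heq]
  · simp only [Finset.mem_filter, Finset.mem_univ, true_and]
    exact not_lt.2 (Fin.le_last _)
end

section
/- For a plane permutation p = (s, π) on [n], the number of cycles of π plus the number of cycles of D_p = s ∘ π⁻¹ is at most n + 1. -/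
open Equiv Equiv.Perm Finset

/-- Number of cycles (orbits, including fixed points) of a permutation. -/
def cycleCount {α : Type*} [Fintype α] [DecidableEq α] (σ : Equiv.Perm α) : ℕ :=
  Fintype.card α - σ.cycleType.sum + σ.cycleType.card

variable {α : Type*} [Fintype α] [DecidableEq α]

lemma cycleType_sum_le (σ : Equiv.Perm α) : σ.cycleType.sum ≤ Fintype.card α := by
  rw [Equiv.Perm.sum_cycleType]; exact Finset.card_le_univ _

/-- Splitting: multiplying by `swap x (π x)` increases the cycle count by exactly 1. -/
lemma cycleCount_split (π : Equiv.Perm α) (x : α) (hx : π x ≠ x) :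
    cycleCount (Equiv.swap x (π x) * π) = cycleCount π + 1 := by
  classical
  set c := π.cycleOf x with hc
  have hcmem : c ∈ π.cycleFactorsFinset :=
    (Equiv.Perm.cycleOf_mem_cycleFactorsFinset_iff).2 (Equiv.Perm.mem_support.2 hx)
  set d := π * c⁻¹ with hdd
  have hdisj : d.Disjoint c := Equiv.Perm.disjoint_mul_inv_of_mem_cycleFactorsFinset hcmem
  have hπ : d * c = π := by rw [hdd, inv_mul_cancel_right]
  have hcyc : c.IsCycle := Equiv.Perm.isCycle_cycleOf π hx
  have hcx : c x = π x := Equiv.Perm.cycleOf_apply_self π x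
  have hccx : c (π x) = π (π x) := by
    have : π.SameCycle x (π x) := Equiv.Perm.sameCycle_apply_right.2 (Equiv.Perm.SameCycle.refl _ _)
    exact this.cycleOf_apply
  have hπx2 : π (π x) ≠ π x := fun h => hx (π.injective h)
  have hxc : x ∈ c.support := Equiv.Perm.mem_support.2 (by rw [hcx]; exact hx)
  have hπxc : π x ∈ c.support := Equiv.Perm.mem_support.2 (by rw [hccx]; exact hπx2)
  set w : Equiv.Perm α := Equiv.swap x (π x) with hw
  have hdx : d x = x := by
    rcases hdisj x with h | h
    · exact h
    · exact absurd h (Equiv.Perm.mem_support.1 hxc)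
  have hdπx : d (π x) = π x := by
    rcases hdisj (π x) with h | h
    · exact h
    · exact absurd h (Equiv.Perm.mem_support.1 hπxc)
  have hwd : w.Disjoint d := by
    intro y
    by_cases h1 : y = x
    · right; rw [h1, hdx]
    by_cases h2 : y = π x
    · right; rw [h2, hdπx]
    · left; exact Equiv.swap_apply_of_ne_of_ne h1 h2
  have hcomm : w * d = d * w := hwd.commute
  have hπtype : π.cycleType = d.cycleType + c.cycleType := by
    rw [← hπ]; exact hdisj.cycleType_mul
  have hwπ : w * π = d * (w * c) := by
    rw [← hπ, ← mul_assoc, hcomm, mul_assoc]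
  by_cases h2 : π (π x) = x
  · -- c is the swap itself
    have hceq : c = w := by
      have := hcyc.eq_swap_of_apply_apply_eq_self (by rw [hcx]; exact hx)
        (by rw [hcx, hccx]; exact h2)
      rw [this, hcx]
    have hwπd : w * π = d := by
      rw [hwπ, hceq, hw, Equiv.swap_mul_self, mul_one]
    have hctype : c.cycleType = {2} := by
      rw [hcyc.cycleType, hceq, hw, Equiv.Perm.card_support_swap (Ne.symm hx)]
    rw [hwπd]
    have hsum := cycleType_sum_le π
    rw [hπtype, hctype] at hsum
    simp only [Multiset.sum_add, Multiset.card_add, Multiset.sum_singleton,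
      Multiset.card_singleton] at hsum
    simp only [cycleCount, hπtype, hctype, Multiset.sum_add, Multiset.card_add,
      Multiset.sum_singleton, Multiset.card_singleton]
    omega
  · -- general splitting of the cycle c
    have hcx' : c x ≠ x := by rw [hcx]; exact hx
    have hccx' : c (c x) ≠ x := by rw [hcx, hccx]; exact h2
    have hc'cyc : (Equiv.swap x (c x) * c).IsCycle := hcyc.swap_mul hcx' hccx'
    have hwc : w = Equiv.swap x (c x) := by rw [hw, hcx]
    have hsupp : (Equiv.swap x (c x) * c).support = c.support \ {x} :=
      Equiv.Perm.support_swap_mul_eq c x hccx'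
    have hcard : (Equiv.swap x (c x) * c).support.card = c.support.card - 1 := by
      rw [hsupp, Finset.sdiff_singleton_eq_erase, Finset.card_erase_of_mem hxc]
    have hdisj' : d.Disjoint (Equiv.swap x (c x) * c) := by
      intro y
      rcases hdisj y with h | h
      · exact Or.inl h
      · right
        have hy1 : y ≠ x := fun hh => (Equiv.Perm.mem_support.1 hxc) (hh ▸ h)
        have hy2 : y ≠ c x := by
          rw [hcx]; exact fun hh => (Equiv.Perm.mem_support.1 hπxc) (hh ▸ h)
        rw [Equiv.Perm.mul_apply, h, Equiv.swap_apply_of_ne_of_ne hy1 hy2]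
    have hwπ2 : w * π = d * (Equiv.swap x (c x) * c) := by rw [hwπ, hwc]
    have htype' : (w * π).cycleType = d.cycleType + {c.support.card - 1} := by
      rw [hwπ2, hdisj'.cycleType_mul, hc'cyc.cycleType, hcard]
    have hctype : c.cycleType = {c.support.card} := by rw [hcyc.cycleType]
    have hk : 1 ≤ c.support.card := Finset.card_pos.2 ⟨x, hxc⟩
    have hsum := cycleType_sum_le π
    rw [hπtype, hctype] at hsum
    simp only [Multiset.sum_add, Multiset.card_add, Multiset.sum_singleton,
      Multiset.card_singleton] at hsum
    simp only [cycleCount, htype', hπtype, hctype, Multiset.sum_add, Multiset.card_add,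
      Multiset.sum_singleton, Multiset.card_singleton]
    omega

/-- Attaching: if `σ` fixes `u`, multiplying by `swap u v` decreases cycle count by 1. -/
lemma cycleCount_attach (σ : Equiv.Perm α) (u v : α) (hu : σ u = u) (huv : u ≠ v) :
    cycleCount (Equiv.swap u v * σ) + 1 = cycleCount σ := by
  set τ := Equiv.swap u v * σ with hτ
  have hτu : τ u = v := by rw [hτ, Equiv.Perm.mul_apply, hu, Equiv.swap_apply_left]
  have hτu' : τ u ≠ u := by rw [hτu]; exact Ne.symm huv
  have := cycleCount_split τ u hτu'
  rw [hτu] at this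
  have hback : Equiv.swap u v * τ = σ := by
    rw [hτ, ← mul_assoc, Equiv.swap_mul_self, one_mul]
  rw [hback] at this
  omega

/-- Key bound: multiplying by any swap increases cycle count by at most 1. -/
lemma cycleCount_swap_mul_le (N : ℕ) :
    ∀ ρ : Equiv.Perm α, ρ.support.card ≤ N → ∀ a b : α, a ≠ b →
      cycleCount (Equiv.swap a b * ρ) ≤ cycleCount ρ + 1 := by
  induction N with
  | zero =>
    intro ρ hρ a b hab
    have : ρ = 1 := by
      rw [← Equiv.Perm.support_eq_empty_iff]
      exact Finset.card_eq_zero.1 (Nat.le_zero.1 hρ)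
    subst this
    have := cycleCount_attach (1 : Equiv.Perm α) a b rfl hab
    omega
  | succ N ih =>
    intro ρ hρ a b hab
    by_cases ha : ρ a = a
    · have := cycleCount_attach ρ a b ha hab
      omega
    by_cases hb : ρ b = b
    · rw [Equiv.swap_comm]
      have := cycleCount_attach ρ b a hb (Ne.symm hab)
      omega
    by_cases hba : b = ρ a
    · rw [hba]
      rw [cycleCount_split ρ a ha]
    · -- general case
      set c := ρ a with hcdef
      have hac : a ≠ c := Ne.symm ha
      have hbc : b ≠ c := hba
      set ρ' := Equiv.swap a c * ρ with hρ'
      have hsplit : cycleCount ρ' = cycleCount ρ + 1 := cycleCount_split ρ a ha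
      have hcardlt : ρ'.support.card < ρ.support.card := Equiv.Perm.card_support_swap_mul ha
      have hρ'N : ρ'.support.card ≤ N := by omega
      have hρ'a : ρ' a = a := by
        rw [hρ', Equiv.Perm.mul_apply, ← hcdef, Equiv.swap_apply_right]
      set σ := Equiv.swap c b * ρ' with hσ
      have hσle : cycleCount σ ≤ cycleCount ρ' + 1 := ih ρ' hρ'N c b (Ne.symm hbc)
      have hσa : σ a = a := by
        rw [hσ, Equiv.Perm.mul_apply, hρ'a, Equiv.swap_apply_of_ne_of_ne hac hab]
      have hattach : cycleCount (Equiv.swap a c * σ) + 1 = cycleCount σ :=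
        cycleCount_attach σ a c hσa hac
      have hrw : Equiv.swap a b * ρ = Equiv.swap a c * σ := by
        rw [hσ, hρ', ← mul_assoc, ← mul_assoc]
        congr 1
        ext y
        simp only [Equiv.Perm.mul_apply, Equiv.swap_apply_def]
        rcases eq_or_ne y a with rfl | hya
        · simp [hab, hac, hbc, Ne.symm hab, Ne.symm hac, Ne.symm hbc]
        rcases eq_or_ne y b with rfl | hyb
        · simp [hab, hac, hbc, Ne.symm hab, Ne.symm hac, Ne.symm hbc]
        rcases eq_or_ne y c with rfl | hyc
        · simp [hab, hac, hbc, Ne.symm hab, Ne.symm hac, Ne.symm hbc]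
        · simp [hab, hac, hbc, Ne.symm hab, Ne.symm hac, Ne.symm hbc, hya, hyb, hyc]
      rw [hrw]
      omega

lemma cycleCount_one : cycleCount (1 : Equiv.Perm α) = Fintype.card α := by
  simp [cycleCount, Equiv.Perm.cycleType_one]

lemma main_aux (s : Equiv.Perm α)
    (hs : cycleCount (1 : Equiv.Perm α) + cycleCount s ≤ Fintype.card α + 1) (N : ℕ) :
    ∀ π : Equiv.Perm α, π.support.card ≤ N →
      cycleCount π + cycleCount (s * π⁻¹) ≤ Fintype.card α + 1 := by
  induction N with
  | zero =>
    intro π hπ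
    have : π = 1 := by
      rw [← Equiv.Perm.support_eq_empty_iff]
      exact Finset.card_eq_zero.1 (Nat.le_zero.1 hπ)
    subst this
    simpa using hs
  | succ N ih =>
    intro π hπ
    by_cases h1 : π = 1
    · subst h1; simpa using hs
    obtain ⟨x, hx⟩ : ∃ x, π x ≠ x := by
      by_contra h
      push_neg at h
      exact h1 (Equiv.ext h)
    set π' := Equiv.swap x (π x) * π with hπ'
    have hsplit : cycleCount π' = cycleCount π + 1 := cycleCount_split π x hx
    have hlt : π'.support.card < π.support.card := Equiv.Perm.card_support_swap_mul hx
    have hN : π'.support.card ≤ N := by omega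
    have hIH := ih π' hN
    -- s * π⁻¹ = (s * π'⁻¹) * swap x (π x)
    have hinv : s * π⁻¹ = (s * π'⁻¹) * Equiv.swap x (π x) := by
      rw [hπ']
      group
    set ρ := s * π'⁻¹ with hρ
    have hkey : cycleCount (ρ * Equiv.swap x (π x)) ≤ cycleCount ρ + 1 := by
      rw [Equiv.mul_swap_eq_swap_mul]
      exact cycleCount_swap_mul_le (ρ.support.card) ρ le_rfl _ _
        (fun h => hx (ρ.injective h).symm)
    rw [hinv]
    omega

/-- For a plane permutation `p = (s, π)` on `[n]` (with `s` an `n`-cycle,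
given by a listing `f` as `s = f * finRotate n * f⁻¹`), the number of cycles
of `π` plus the number of cycles of the diagonal `D_p = s * π⁻¹` is at most `n + 1`. -/
theorem cycleCount_add_cycleCount_diag_le
    (n : ℕ) (f π : Equiv.Perm (Fin n)) :
    cycleCount π + cycleCount ((f * finRotate n * f⁻¹) * π⁻¹) ≤ n + 1 := by
  have hcard : Fintype.card (Fin n) = n := Fintype.card_fin n
  have hs : cycleCount (1 : Equiv.Perm (Fin n)) + cycleCount (f * finRotate n * f⁻¹)
      ≤ Fintype.card (Fin n) + 1 := by
    match n with
    | 0 =>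
      have : (f * finRotate 0 * f⁻¹) = 1 := Subsingleton.elim _ _
      rw [this, cycleCount_one]
      simp
    | 1 =>
      have : (f * finRotate 1 * f⁻¹) = 1 := Subsingleton.elim _ _
      rw [this, cycleCount_one]
      simp
    | (m + 2) =>
      have htype : (f * finRotate (m + 2) * f⁻¹).cycleType = {m + 2} := by
        rw [Equiv.Perm.cycleType_conj, cycleType_finRotate]
      rw [cycleCount_one]
      simp only [cycleCount, htype, Multiset.sum_singleton, Multiset.card_singleton,
        Fintype.card_fin]
      omega
  have := main_aux (f * finRotate n * f⁻¹) hs (π.support.card) π le_rfl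
  rwa [hcard] at this
end

section
/- Let σ be an n-cycle and π an arbitrary permutation of [n], and let τ be the permutation obtained from π by a single block-transposition move: namely τ = D⁻¹ ∘ σ' where D = σ ∘ π⁻¹ and σ' is the n-cycle obtained from σ by interchanging two adjacent blocks of its cycle listing. Then C(π) - C(τ) ∈ {-2, 0, 2}. -/
namespace TransposeAux

open Equiv Equiv.Perm Finset

variable {α : Type*} [Fintype α] [DecidableEq α]

/-- The orbit (cycle) of `a` under `σ`, as a finset. -/
def orbitF (σ : Perm α) (a : α) : Finset α := univ.filter fun b => σ.SameCycle a b

lemma mem_orbitF {σ : Perm α} {a b : α} : b ∈ orbitF σ a ↔ σ.SameCycle a b := by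
  simp [orbitF]

lemma orbitF_eq_iff {σ : Perm α} {a b : α} : orbitF σ a = orbitF σ b ↔ σ.SameCycle a b := by
  constructor
  · intro h
    exact mem_orbitF.1 (h ▸ mem_orbitF.2 (SameCycle.refl σ b))
  · intro h
    ext c
    simp only [mem_orbitF]
    exact ⟨fun h' => h.symm.trans h', fun h' => h.trans h'⟩

/-- The number of orbits of `σ`. -/
def orbitCount (σ : Perm α) : ℕ := (univ.image (orbitF σ)).card

lemma orbitF_eq_support_cycleOf {σ : Perm α} {a : α} (ha : a ∈ σ.support) :
    orbitF σ a = (σ.cycleOf a).support := by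
  ext b
  rw [mem_orbitF, mem_support_cycleOf_iff]
  exact ⟨fun h => ⟨h, ha⟩, fun h => h.1⟩

lemma orbitCount_eq_cycleCount (σ : Perm α) : orbitCount σ = cycleCount σ := by
  classical
  have hsplit : (univ : Finset α) = σ.supportᶜ ∪ σ.support := by
    ext a
    by_cases h : a ∈ σ.support <;> simp [h]
  have himg : (univ : Finset α).image (orbitF σ)
      = σ.supportᶜ.image (orbitF σ) ∪ σ.support.image (orbitF σ) := by
    rw [hsplit, Finset.image_union]
  have hdisj : Disjoint (σ.supportᶜ.image (orbitF σ)) (σ.support.image (orbitF σ)) := by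
    rw [Finset.disjoint_left]
    rintro s hs ht
    obtain ⟨a, ha, rfl⟩ := Finset.mem_image.1 hs
    obtain ⟨b, hb, hab⟩ := Finset.mem_image.1 ht
    have hsc : σ.SameCycle b a := orbitF_eq_iff.1 hab
    have := hsc.mem_support_iff
    rw [Finset.mem_compl] at ha
    exact ha (this.1 hb)
  have hcard1 : (σ.supportᶜ.image (orbitF σ)).card = σ.supportᶜ.card := by
    apply Finset.card_image_of_injOn
    intro a ha b hb hab
    have hsc : σ.SameCycle a b := orbitF_eq_iff.1 hab
    simp only [Finset.coe_compl, Set.mem_compl_iff, Finset.mem_coe,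
      Equiv.Perm.mem_support, not_not] at ha
    exact hsc.eq_of_left ha
  have himg2 : σ.support.image (orbitF σ)
      = σ.cycleFactorsFinset.image Equiv.Perm.support := by
    ext s
    simp only [Finset.mem_image]
    constructor
    · rintro ⟨a, ha, rfl⟩
      exact ⟨σ.cycleOf a, cycleOf_mem_cycleFactorsFinset_iff.2 ha,
        (orbitF_eq_support_cycleOf ha).symm⟩
    · rintro ⟨c, hc, rfl⟩
      have hcyc : c.IsCycle := (mem_cycleFactorsFinset_iff.1 hc).1
      obtain ⟨a, ha⟩ := hcyc.nonempty_support
      have hca : c = σ.cycleOf a := cycle_is_cycleOf ha hc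
      have haσ : a ∈ σ.support := by
        rw [Equiv.Perm.mem_support]
        intro h
        have : σ.cycleOf a = 1 := (cycleOf_eq_one_iff σ).2 h
        exact hcyc.ne_one (hca.trans this)
      exact ⟨a, haσ, by rw [orbitF_eq_support_cycleOf haσ, ← hca]⟩
  have hcard2 : (σ.cycleFactorsFinset.image Equiv.Perm.support).card
      = σ.cycleFactorsFinset.card := by
    apply Finset.card_image_of_injOn
    intro c hc d hd hcd
    have hcyc : c.IsCycle := (mem_cycleFactorsFinset_iff.1 hc).1
    obtain ⟨a, ha⟩ := hcyc.nonempty_support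
    have ha' : a ∈ d.support := by rw [← hcd]; exact ha
    rw [cycle_is_cycleOf ha hc, cycle_is_cycleOf ha' hd]
  have hsum : σ.cycleType.sum = σ.support.card := sum_cycleType σ
  have hcardt : Multiset.card σ.cycleType = σ.cycleFactorsFinset.card := by
    rw [cycleType_def, Multiset.card_map]
    rfl
  rw [orbitCount, himg, Finset.card_union_of_disjoint hdisj, hcard1, himg2, hcard2,
    cycleCount, hsum, hcardt, Finset.card_compl]

omit [Fintype α] [DecidableEq α] in
lemma zpow_eq_outside {p q : Perm α} {A : Finset α}
    (h1 : ∀ z, z ∉ A → p z = q z)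
    (h2 : ∀ z, z ∉ A → p z ∉ A)
    (h3 : ∀ z, z ∉ A → p⁻¹ z ∉ A) :
    ∀ (k : ℤ) (z : α), z ∉ A → (p ^ k) z ∉ A ∧ (p ^ k) z = (q ^ k) z := by
  have hinv : ∀ z, z ∉ A → p⁻¹ z = q⁻¹ z := by
    intro z hz
    have h4 := h3 z hz
    have hqp : q (p⁻¹ z) = z := by rw [← h1 _ h4]; exact p.apply_symm_apply z
    exact q.injective (by rw [hqp]; exact (q.apply_symm_apply z).symm)
  intro k
  induction k using Int.induction_on with
  | zero => simp
  | succ k ih =>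
    intro z hz
    have hstep : ∀ (r : Perm α), (r ^ ((k : ℤ) + 1)) z = (r ^ (k : ℤ)) (r z) := by
      intro r
      rw [zpow_add_one, Equiv.Perm.mul_apply]
    have hpz := h2 z hz
    obtain ⟨ih1, ih2⟩ := ih (p z) hpz
    refine ⟨by rwa [hstep], ?_⟩
    rw [hstep, hstep, ih2, h1 z hz]
  | pred k ih =>
    intro z hz
    have hstep : ∀ (r : Perm α), (r ^ (-(k : ℤ) - 1)) z = (r ^ (-(k : ℤ))) (r⁻¹ z) := by
      intro r
      rw [zpow_sub_one, Equiv.Perm.mul_apply]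
    have hpz := h3 z hz
    obtain ⟨ih1, ih2⟩ := ih (p⁻¹ z) hpz
    refine ⟨by rwa [hstep], ?_⟩
    rw [hstep, hstep, ih2, hinv z hz]

lemma orbitCount_swap_mul_le (g : Perm α) (x y : α) :
    orbitCount (Equiv.swap x y * g) ≤ orbitCount g + 1 := by
  classical
  set h : Perm α := Equiv.swap x y * g with hh
  set A : Finset α := orbitF h x ∪ orbitF h y with hA
  have memA : ∀ z, z ∈ A ↔ (h.SameCycle x z ∨ h.SameCycle y z) := by
    intro z
    simp [hA, mem_orbitF]
  have hxA : x ∈ A := (memA x).2 (Or.inl (SameCycle.refl h x))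
  have hyA : y ∈ A := (memA y).2 (Or.inr (SameCycle.refl h y))
  have hclosure : ∀ z, z ∉ A → h z ∉ A := by
    intro z hz hzA
    apply hz
    rcases (memA (h z)).1 hzA with hc | hc
    · exact (memA z).2 (Or.inl (hc.trans ⟨-1, by simp⟩))
    · exact (memA z).2 (Or.inr (hc.trans ⟨-1, by simp⟩))
  have hclosure' : ∀ z, z ∉ A → h⁻¹ z ∉ A := by
    intro z hz hzA
    apply hz
    rcases (memA (h⁻¹ z)).1 hzA with hc | hc
    · exact (memA z).2 (Or.inl (hc.trans ⟨1, by simp⟩))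
    · exact (memA z).2 (Or.inr (hc.trans ⟨1, by simp⟩))
  have heq : ∀ z, z ∉ A → h z = g z := by
    intro z hz
    have hhz := hclosure z hz
    have hx' : h z ≠ x := fun hc => hhz (hc ▸ hxA)
    have hy' : h z ≠ y := fun hc => hhz (hc ▸ hyA)
    have : g z = Equiv.swap x y (h z) := by
      rw [hh]
      simp [Equiv.Perm.mul_apply, Equiv.swap_apply_self]
    rw [this, Equiv.swap_apply_of_ne_of_ne hx' hy']
  have key := zpow_eq_outside heq hclosure hclosure'
  have E : ∀ a, a ∉ A → ∀ b, (g.SameCycle a b ↔ h.SameCycle a b) := by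
    intro a ha b
    constructor
    · rintro ⟨k, hk⟩
      exact ⟨k, by rw [(key k a ha).2]; exact hk⟩
    · rintro ⟨k, hk⟩
      exact ⟨k, by rw [← (key k a ha).2]; exact hk⟩
  have horb : ∀ a, a ∉ A → orbitF h a = orbitF g a := by
    intro a ha
    ext b
    rw [mem_orbitF, mem_orbitF]
    exact (E a ha b).symm
  -- counting
  have hsplit : (univ : Finset α) = Aᶜ ∪ A := by
    ext a
    by_cases hc : a ∈ A <;> simp [hc]
  have himgh : (univ : Finset α).image (orbitF h)
      = Aᶜ.image (orbitF h) ∪ A.image (orbitF h) := by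
    rw [hsplit, Finset.image_union]
  have himgc : Aᶜ.image (orbitF h) = Aᶜ.image (orbitF g) := by
    apply Finset.image_congr
    intro a ha
    exact horb a (Finset.mem_compl.1 ha)
  have hcardA : (A.image (orbitF h)).card ≤ 2 := by
    have hsub : A.image (orbitF h) ⊆ {orbitF h x, orbitF h y} := by
      intro s hs
      obtain ⟨a, ha, rfl⟩ := Finset.mem_image.1 hs
      rcases (memA a).1 ha with hc | hc
      · exact Finset.mem_insert.2 (Or.inl (orbitF_eq_iff.2 hc.symm))
      · simp only [Finset.mem_insert, Finset.mem_singleton]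
        exact Or.inr (orbitF_eq_iff.2 hc.symm)
    exact le_trans (Finset.card_le_card hsub) ((Finset.card_insert_le _ _).trans (by simp))
  have hnotmem : orbitF g x ∉ Aᶜ.image (orbitF g) := by
    intro hc
    obtain ⟨a, ha, hab⟩ := Finset.mem_image.1 hc
    have ha' : a ∉ A := Finset.mem_compl.1 ha
    have : g.SameCycle a x := orbitF_eq_iff.1 hab.symm |>.symm
    have : h.SameCycle a x := (E a ha' x).1 (orbitF_eq_iff.1 hab)
    exact ha' ((memA a).2 (Or.inl this.symm))
  have hlow : (Aᶜ.image (orbitF g)).card + 1 ≤ orbitCount g := by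
    have hsub : insert (orbitF g x) (Aᶜ.image (orbitF g)) ⊆ univ.image (orbitF g) := by
      intro s hs
      rcases Finset.mem_insert.1 hs with rfl | hs
      · exact Finset.mem_image.2 ⟨x, Finset.mem_univ x, rfl⟩
      · obtain ⟨a, _, rfl⟩ := Finset.mem_image.1 hs
        exact Finset.mem_image.2 ⟨a, Finset.mem_univ a, rfl⟩
    calc (Aᶜ.image (orbitF g)).card + 1
        = (insert (orbitF g x) (Aᶜ.image (orbitF g))).card := by
          rw [Finset.card_insert_of_notMem hnotmem]
      _ ≤ orbitCount g := Finset.card_le_card hsub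
  calc orbitCount h = ((univ : Finset α).image (orbitF h)).card := rfl
    _ ≤ (Aᶜ.image (orbitF h)).card + (A.image (orbitF h)).card := by
        rw [himgh]; exact Finset.card_union_le _ _
    _ ≤ (Aᶜ.image (orbitF g)).card + 2 := by rw [himgc]; omega
    _ ≤ orbitCount g + 1 := by omega

lemma cycleCount_swap_mul_le (g : Perm α) (x y : α) :
    cycleCount (Equiv.swap x y * g) ≤ cycleCount g + 1 := by
  rw [← orbitCount_eq_cycleCount, ← orbitCount_eq_cycleCount]
  exact orbitCount_swap_mul_le g x y

lemma cycleCount_le_swap_mul (g : Perm α) (x y : α) :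
    cycleCount g ≤ cycleCount (Equiv.swap x y * g) + 1 := by
  have h := cycleCount_swap_mul_le (Equiv.swap x y * g) x y
  rwa [← mul_assoc, Equiv.swap_mul_self, one_mul] at h

lemma cycleCount_cast (σ : Perm α) :
    (cycleCount σ : ℤ)
      = (Fintype.card α : ℤ) - σ.cycleType.sum + Multiset.card σ.cycleType := by
  have h : σ.cycleType.sum ≤ Fintype.card α := by
    rw [sum_cycleType]
    exact le_trans (Finset.card_le_univ _) (le_of_eq (Finset.card_univ))
  rw [cycleCount]
  push_cast [Nat.cast_sub h]
  ring

lemma sign_parity (g : Perm α) {x y : α} (hxy : x ≠ y) :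
    ∃ t : ℕ, (Equiv.swap x y * g).cycleType.sum + Multiset.card (Equiv.swap x y * g).cycleType
      + (g.cycleType.sum + Multiset.card g.cycleType) = 2 * t + 1 := by
  classical
  set h : Perm α := Equiv.swap x y * g with hh
  have hsign : Equiv.Perm.sign h = -Equiv.Perm.sign g := by
    rw [hh, Equiv.Perm.sign_mul, Equiv.Perm.sign_swap hxy, neg_one_mul]
  have hm : ((-1 : ℤˣ)) ^ (h.cycleType.sum + Multiset.card h.cycleType
      + (g.cycleType.sum + Multiset.card g.cycleType)) = -1 := by
    rw [pow_add, ← Equiv.Perm.sign_of_cycleType, ← Equiv.Perm.sign_of_cycleType, hsign]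
    simp [← mul_self_eq_one_iff]
  rcases Nat.even_or_odd (h.cycleType.sum + Multiset.card h.cycleType
      + (g.cycleType.sum + Multiset.card g.cycleType)) with he | ho
  · exfalso
    rw [he.neg_one_pow] at hm
    exact absurd hm (by decide)
  · obtain ⟨t, ht⟩ := ho
    exact ⟨t, ht⟩

lemma step_mem (g : Perm α) {x y : α} (hxy : x ≠ y) :
    ((cycleCount (Equiv.swap x y * g) : ℤ) - cycleCount g) = 1 ∨
    ((cycleCount (Equiv.swap x y * g) : ℤ) - cycleCount g) = -1 := by
  have h1 := cycleCount_swap_mul_le g x y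
  have h2 := cycleCount_le_swap_mul g x y
  have hc1 := cycleCount_cast (Equiv.swap x y * g)
  have hc2 := cycleCount_cast g
  have hs1 : (Equiv.swap x y * g).cycleType.sum ≤ Fintype.card α := by
    rw [sum_cycleType]
    exact le_trans (Finset.card_le_univ _) (le_of_eq (Finset.card_univ))
  have hs2 : g.cycleType.sum ≤ Fintype.card α := by
    rw [sum_cycleType]
    exact le_trans (Finset.card_le_univ _) (le_of_eq (Finset.card_univ))
  obtain ⟨t, ht⟩ := sign_parity g hxy
  omega

lemma two_swaps (g : Perm α) {x y z w : α} (hxy : x ≠ y) (hzw : z ≠ w) :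
    ((cycleCount g : ℤ) - cycleCount (g * Equiv.swap x y * Equiv.swap z w))
      ∈ ({-2, 0, 2} : Set ℤ) := by
  have e1 : g * Equiv.swap x y = Equiv.swap (g x) (g y) * g :=
    Equiv.mul_swap_eq_swap_mul g x y
  set g1 : Perm α := Equiv.swap (g x) (g y) * g with hg1
  have e2 : g1 * Equiv.swap z w = Equiv.swap (g1 z) (g1 w) * g1 :=
    Equiv.mul_swap_eq_swap_mul g1 z w
  have hxy1 : g x ≠ g y := fun hc => hxy (g.injective hc)
  have hzw1 : g1 z ≠ g1 w := fun hc => hzw (g1.injective hc)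
  have s1 := step_mem g hxy1
  have s2 := step_mem g1 hzw1
  rw [← hg1] at s1
  have hrw : g * Equiv.swap x y * Equiv.swap z w = Equiv.swap (g1 z) (g1 w) * g1 := by
    rw [e1, e2]
  rw [hrw]
  simp only [Set.mem_insert_iff, Set.mem_singleton_iff]
  omega

end TransposeAux

open Fin.NatCast in
/-- Let `σ = (s_0 s_1 ⋯ s_{n-1})` be the `n`-cycle given by the listing `f`
(`s_m = f m`), i.e. `σ = f * finRotate n * f⁻¹`, and let `π` be arbitrary,
with diagonal `D = σ * π⁻¹`.  For indices `1 ≤ i ≤ j < l ≤ n - 1`, the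
transpose (interchange of the adjacent blocks `[s_i, s_j]` and `[s_{j+1}, s_l]`)
produces the `n`-cycle
`σ' = (s_i s_{j+1}) * (s_{j+1} s_{l+1}) * σ`, and the new vertical permutation
is `τ = D⁻¹ * σ'`.  Then `C(π) - C(τ) ∈ {-2, 0, 2}`. -/
theorem transpose_cycleCount_diff
    (n : ℕ) [NeZero n] (f π : Equiv.Perm (Fin n)) (i j l : ℕ)
    (h1 : 1 ≤ i) (h2 : i ≤ j) (h3 : j < l) (h4 : l ≤ n - 1) :
    ((cycleCount π : ℤ) -
      (cycleCount
        (((f * finRotate n * f⁻¹) * π⁻¹)⁻¹ *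
          (Equiv.swap (f (i : Fin n)) (f ((j + 1 : ℕ) : Fin n)) *
            Equiv.swap (f ((j + 1 : ℕ) : Fin n)) (f ((l + 1 : ℕ) : Fin n)) *
              (f * finRotate n * f⁻¹)) ) : ℤ)) ∈ ({-2, 0, 2} : Set ℤ) := by
  have hn : 1 ≤ n := Nat.one_le_iff_ne_zero.2 (NeZero.ne n)
  have hln : l < n := by omega
  have hjn : j + 1 < n := by omega
  have hin : i < n := by omega
  -- distinctness of the swap points
  have hd1 : (i : Fin n) ≠ ((j + 1 : ℕ) : Fin n) := by
    intro hc
    have := congrArg Fin.val hc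
    rw [Fin.val_natCast, Fin.val_natCast, Nat.mod_eq_of_lt hin, Nat.mod_eq_of_lt hjn] at this
    omega
  have hd2 : ((j + 1 : ℕ) : Fin n) ≠ ((l + 1 : ℕ) : Fin n) := by
    intro hc
    have := congrArg Fin.val hc
    rcases Nat.lt_or_ge (l + 1) n with hl1 | hl1
    · rw [Fin.val_natCast, Fin.val_natCast, Nat.mod_eq_of_lt hjn, Nat.mod_eq_of_lt hl1] at this
      omega
    · have hl2 : l + 1 = n := by omega
      rw [Fin.val_natCast, Fin.val_natCast, Nat.mod_eq_of_lt hjn, hl2, Nat.mod_self] at this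
      omega
  set σ : Equiv.Perm (Fin n) := f * finRotate n * f⁻¹ with hσ
  set a : Fin n := f (i : Fin n)
  set b : Fin n := f ((j + 1 : ℕ) : Fin n)
  set c : Fin n := f ((l + 1 : ℕ) : Fin n)
  have hab : a ≠ b := fun hc => hd1 (f.injective hc)
  have hbc : b ≠ c := fun hc => hd2 (f.injective hc)
  have hab' : σ⁻¹ a ≠ σ⁻¹ b := fun hc => hab (σ⁻¹.injective hc)
  have hbc' : σ⁻¹ b ≠ σ⁻¹ c := fun hc => hbc (σ⁻¹.injective hc)
  have hrw : (σ * π⁻¹)⁻¹ * (Equiv.swap a b * Equiv.swap b c * σ)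
      = π * Equiv.swap (σ⁻¹ a) (σ⁻¹ b) * Equiv.swap (σ⁻¹ b) (σ⁻¹ c) := by
    have e1 : Equiv.swap (σ⁻¹ a) (σ⁻¹ b) = σ⁻¹ * Equiv.swap a b * σ := by
      rw [Equiv.swap_apply_apply σ⁻¹ a b, inv_inv]
    have e2 : Equiv.swap (σ⁻¹ b) (σ⁻¹ c) = σ⁻¹ * Equiv.swap b c * σ := by
      rw [Equiv.swap_apply_apply σ⁻¹ b c, inv_inv]
    rw [e1, e2]
    group
  rw [hrw]
  exact TransposeAux.two_swaps π hab' hbc'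
end

section
/- Let σ be an n-cycle and π an arbitrary permutation of [n], let D = σ ∘ π⁻¹, let σ' be the n-cycle obtained from σ by interchanging two (not necessarily adjacent) blocks of its cycle listing, and let τ = D⁻¹ ∘ σ'. Then C(π) - C(τ) ∈ {-2, 0, 2}. -/
open Equiv Equiv.Perm

section Aux

variable {α : Type*} [Fintype α] [DecidableEq α]

/-- A permutation fixing `a` fixes it under same-cycle. -/
private lemma fixed_sameCycle {g : Perm α} {a b : α} (hab : g.SameCycle a b)
    (ha : a ∉ g.support) : b = a := by
  obtain ⟨m, hm⟩ := hab
  rw [Equiv.Perm.notMem_support] at ha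
  rw [← hm, Equiv.Perm.zpow_apply_eq_self_of_apply_eq_self ha]

/-- `cycleCount` equals the number of orbits (classes of `SameCycle`). -/
lemma cycleCount_eq_nat_card (g : Perm α) :
    cycleCount g = Nat.card (Quotient (Equiv.Perm.SameCycle.setoid g)) := by
  classical
  let φ : α → ({x : α // x ∉ g.support} ⊕ {c : Perm α // c ∈ g.cycleFactorsFinset}) :=
    fun a =>
      if h : a ∈ g.support then
        Sum.inr ⟨g.cycleOf a, Equiv.Perm.cycleOf_mem_cycleFactorsFinset_iff.mpr h⟩
      else Sum.inl ⟨a, h⟩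
  have resp : ∀ a b : α, g.SameCycle a b → φ a = φ b := by
    intro a b hab
    by_cases ha : a ∈ g.support
    · have hb : b ∈ g.support := by
        by_contra hb
        exact hb ((fixed_sameCycle hab.symm hb) ▸ ha)
      simp only [φ, dif_pos ha, dif_pos hb]
      exact congrArg _ (Subtype.ext hab.cycleOf_eq)
    · have : b = a := fixed_sameCycle hab ha
      subst this; rfl
  let F : Quotient (Equiv.Perm.SameCycle.setoid g) →
      ({x : α // x ∉ g.support} ⊕ {c : Perm α // c ∈ g.cycleFactorsFinset}) :=
    Quotient.lift φ resp
  have hbij : Function.Bijective F := by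
    constructor
    · intro q1 q2
      induction q1 using Quotient.ind with | _ a =>
      induction q2 using Quotient.ind with | _ b =>
      intro hF
      apply Quotient.sound
      change g.SameCycle a b
      change φ a = φ b at hF
      simp only [φ] at hF
      by_cases ha : a ∈ g.support <;> by_cases hb : b ∈ g.support
      · rw [dif_pos ha, dif_pos hb] at hF
        have hco : g.cycleOf a = g.cycleOf b :=
          congrArg Subtype.val (Sum.inr.inj hF)
        have hbb : b ∈ (g.cycleOf b).support :=
          (Equiv.Perm.mem_support_cycleOf_iff).mpr ⟨Equiv.Perm.SameCycle.refl _ _, hb⟩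
        rw [← hco] at hbb
        exact ((Equiv.Perm.mem_support_cycleOf_iff).mp hbb).1
      · rw [dif_pos ha, dif_neg hb] at hF
        simp at hF
      · rw [dif_neg ha, dif_pos hb] at hF
        simp at hF
      · rw [dif_neg ha, dif_neg hb] at hF
        have : a = b := congrArg Subtype.val (Sum.inl.inj hF)
        exact this ▸ Equiv.Perm.SameCycle.refl _ _
    · rintro (⟨x, hx⟩ | ⟨c, hc⟩)
      · exact ⟨⟦x⟧, by simp only [F, Quotient.lift_mk, φ, dif_neg hx]⟩
      · obtain ⟨x, hx⟩ :=
          Equiv.Perm.IsCycle.nonempty_support (Equiv.Perm.mem_cycleFactorsFinset_iff.mp hc).1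
        have hxs : x ∈ g.support := Equiv.Perm.mem_cycleFactorsFinset_support_le hc hx
        refine ⟨⟦x⟧, ?_⟩
        simp only [F, Quotient.lift_mk, φ, dif_pos hxs]
        exact congrArg _ (Subtype.ext (Equiv.Perm.cycle_is_cycleOf hx hc).symm)
  have hcard : Nat.card (Quotient (Equiv.Perm.SameCycle.setoid g)) =
      Nat.card {x : α // x ∉ g.support} + Nat.card {c : Perm α // c ∈ g.cycleFactorsFinset} := by
    rw [Nat.card_congr (Equiv.ofBijective F hbij), Nat.card_sum]
  have h1 : Nat.card {x : α // x ∉ g.support} = Fintype.card α - g.support.card := by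
    rw [Nat.card_eq_fintype_card, Fintype.card_subtype_compl, Fintype.card_coe]
  have h2 : Nat.card {c : Perm α // c ∈ g.cycleFactorsFinset} = g.cycleFactorsFinset.card := by
    rw [Nat.card_eq_fintype_card, Fintype.card_coe]
  have h3 : g.cycleType.sum = g.support.card := Equiv.Perm.sum_cycleType g
  have h4 : Multiset.card g.cycleType = g.cycleFactorsFinset.card := by
    rw [Equiv.Perm.cycleType]; simp
  rw [hcard, h1, h2, cycleCount, h3, h4]

/-- Multiplying on the right by a transposition decreases the number of
orbits by at most one. -/
lemma cycleCount_le_mul_swap (g : Perm α) (x y : α) :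
    cycleCount g ≤ cycleCount (g * Equiv.swap x y) + 1 := by
  classical
  rw [cycleCount_eq_nat_card, cycleCount_eq_nat_card]
  set g' : Perm α := g * Equiv.swap x y with hg'
  -- the merged relation: orbits of `g` with the classes of `x` and `y` glued
  let T : α → α → Prop := fun a b =>
    g.SameCycle a b ∨ (g.SameCycle a x ∧ g.SameCycle y b) ∨
      (g.SameCycle a y ∧ g.SameCycle x b)
  have Trefl : ∀ a, T a a := fun a => Or.inl (Equiv.Perm.SameCycle.refl _ _)
  have Tsymm : ∀ {a b}, T a b → T b a := by
    rintro a b (h | ⟨h1, h2⟩ | ⟨h1, h2⟩)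
    · exact Or.inl h.symm
    · exact Or.inr (Or.inr ⟨h2.symm, h1.symm⟩)
    · exact Or.inr (Or.inl ⟨h2.symm, h1.symm⟩)
  have Ttrans : ∀ {a b c}, T a b → T b c → T a c := by
    rintro a b c (p | ⟨p1, p2⟩ | ⟨p1, p2⟩) (q | ⟨q1, q2⟩ | ⟨q1, q2⟩)
    · exact Or.inl (p.trans q)
    · exact Or.inr (Or.inl ⟨p.trans q1, q2⟩)
    · exact Or.inr (Or.inr ⟨p.trans q1, q2⟩)
    · exact Or.inr (Or.inl ⟨p1, p2.trans q⟩)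
    · exact Or.inl (p1.trans (((p2.trans q1).symm).trans q2))
    · exact Or.inl (p1.trans q2)
    · exact Or.inr (Or.inr ⟨p1, p2.trans q⟩)
    · exact Or.inl (p1.trans q2)
    · exact Or.inl (p1.trans (((p2.trans q1).symm).trans q2))
  let Ts : Setoid α := ⟨T, ⟨Trefl, Tsymm, Ttrans⟩⟩
  -- every `g'`-orbit is inside a `T`-class
  have hstep : ∀ a : α, T a (g' a) := by
    intro a
    rcases eq_or_ne a x with rfl | hax
    · have he : g' a = g y := by
        simp [hg', Equiv.swap_apply_left]
      rw [he]
      exact Or.inr (Or.inl ⟨Equiv.Perm.SameCycle.refl _ _, ⟨1, by simp⟩⟩)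
    rcases eq_or_ne a y with rfl | hay
    · have he : g' a = g x := by
        simp [hg', Equiv.swap_apply_right]
      rw [he]
      exact Or.inr (Or.inr ⟨Equiv.Perm.SameCycle.refl _ _, ⟨1, by simp⟩⟩)
    · have he : g' a = g a := by
        simp [hg', Equiv.swap_apply_of_ne_of_ne hax hay]
      rw [he]
      exact Or.inl ⟨1, by simp⟩
  have hpow : ∀ (m : ℕ) (a : α), T a ((g' ^ m) a) := by
    intro m
    induction m with
    | zero => intro a; simpa using Trefl a
    | succ m ih =>
      intro a
      have : (g' ^ (m + 1)) a = (g' ^ m) (g' a) := by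
        rw [pow_succ]; rfl
      rw [this]
      exact Ttrans (hstep a) (ih (g' a))
  have hsub : ∀ a b : α, g'.SameCycle a b → T a b := by
    intro a b hab
    obtain ⟨m, _, hm⟩ := hab.exists_pow_eq'
    exact hm ▸ hpow m a
  -- surjection from `g'`-orbits onto `T`-classes
  have hle1 : Nat.card (Quotient Ts) ≤
      Nat.card (Quotient (Equiv.Perm.SameCycle.setoid g')) := by
    apply Nat.card_le_card_of_surjective
      (Quotient.lift (fun a => (⟦a⟧ : Quotient Ts))
        (fun a b hab => Quotient.sound (hsub a b (by exact hab))))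
    intro q
    induction q using Quotient.ind with | _ a =>
    exact ⟨⟦a⟧, rfl⟩
  -- injection from `g`-orbits into `T`-classes plus one extra point
  have hle2 : Nat.card (Quotient (Equiv.Perm.SameCycle.setoid g)) ≤
      Nat.card (Quotient Ts) + 1 := by
    let ψ : α → (Quotient Ts ⊕ Unit) :=
      fun a => if g.SameCycle y a then Sum.inr () else Sum.inl (⟦a⟧ : Quotient Ts)
    have respψ : ∀ a b : α, g.SameCycle a b → ψ a = ψ b := by
      intro a b hab
      have hiff : g.SameCycle y a ↔ g.SameCycle y b :=
        ⟨fun h => h.trans hab, fun h => h.trans hab.symm⟩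
      by_cases hya : g.SameCycle y a
      · simp only [ψ, if_pos hya, if_pos (hiff.mp hya)]
      · simp only [ψ, if_neg hya, if_neg (fun h => hya (hiff.mpr h))]
        exact congrArg _ (Quotient.sound (Or.inl hab))
    let F : Quotient (Equiv.Perm.SameCycle.setoid g) → (Quotient Ts ⊕ Unit) :=
      Quotient.lift ψ respψ
    have hinj : Function.Injective F := by
      intro q1 q2
      induction q1 using Quotient.ind with | _ a =>
      induction q2 using Quotient.ind with | _ b =>
      intro hF
      apply Quotient.sound
      change g.SameCycle a b
      change ψ a = ψ b at hF
      simp only [ψ] at hF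
      by_cases h1 : g.SameCycle y a <;> by_cases h2 : g.SameCycle y b
      · exact h1.symm.trans h2
      · rw [if_pos h1, if_neg h2] at hF
        simp at hF
      · rw [if_neg h1, if_pos h2] at hF
        simp at hF
      · rw [if_neg h1, if_neg h2] at hF
        have hTab : T a b := Quotient.exact (Sum.inl.inj hF)
        rcases hTab with hab | ⟨hax, hyb⟩ | ⟨hay, hxb⟩
        · exact hab
        · exact absurd hyb h2
        · exact absurd hay.symm h1
    calc Nat.card (Quotient (Equiv.Perm.SameCycle.setoid g)) ≤
        Nat.card (Quotient Ts ⊕ Unit) := Nat.card_le_card_of_injective F hinj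
      _ = Nat.card (Quotient Ts) + 1 := by rw [Nat.card_sum]; simp
  omega

lemma mul_swap_cycleCount_le (g : Perm α) (x y : α) :
    cycleCount (g * Equiv.swap x y) ≤ cycleCount g + 1 := by
  have h := cycleCount_le_mul_swap (g * Equiv.swap x y) x y
  rwa [Equiv.mul_swap_mul_self] at h

lemma neg_one_pow_cycleCount (g : Perm α) :
    (-1 : ℤˣ) ^ (cycleCount g) * Equiv.Perm.sign g = (-1) ^ (Fintype.card α) := by
  rw [Equiv.Perm.sign_of_cycleType, cycleCount, ← pow_add]
  have hsum : g.cycleType.sum ≤ Fintype.card α := by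
    rw [Equiv.Perm.sum_cycleType]
    exact Finset.card_le_univ _
  have he : (Fintype.card α - g.cycleType.sum + Multiset.card g.cycleType) +
      (g.cycleType.sum + Multiset.card g.cycleType) =
      Fintype.card α + 2 * Multiset.card g.cycleType := by omega
  rw [he, pow_add, pow_mul]
  norm_num

lemma even_cycleCount_sub_of_sign_eq {g h : Perm α}
    (hs : Equiv.Perm.sign g = Equiv.Perm.sign h) :
    Even ((cycleCount g : ℤ) - (cycleCount h : ℤ)) := by
  have h1 := neg_one_pow_cycleCount g
  have h2 := neg_one_pow_cycleCount h
  rw [hs] at h1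
  have hu : (-1 : ℤˣ) ^ cycleCount g = (-1 : ℤˣ) ^ cycleCount h :=
    mul_right_cancel (h1.trans h2.symm)
  have hZ : ((-1 : ℤ)) ^ cycleCount g = (-1 : ℤ) ^ cycleCount h := by
    have := congrArg (Units.coeHom ℤ) hu
    simpa using this
  rcases Nat.even_or_odd (cycleCount g) with hg | hg <;>
    rcases Nat.even_or_odd (cycleCount h) with hh | hh
  · obtain ⟨p, hp⟩ := hg; obtain ⟨q, hq⟩ := hh
    exact ⟨(p : ℤ) - (q : ℤ), by omega⟩
  · exfalso; rw [hg.neg_one_pow, hh.neg_one_pow] at hZ; norm_num at hZ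
  · exfalso; rw [hg.neg_one_pow, hh.neg_one_pow] at hZ; norm_num at hZ
  · obtain ⟨p, hp⟩ := hg; obtain ⟨q, hq⟩ := hh
    exact ⟨(p : ℤ) - (q : ℤ), by omega⟩

end Aux

open Fin.NatCast in
/-- Let `σ = (s_0 s_1 ⋯ s_{n-1})` be the `n`-cycle given by the listing `f`
(`s_m = f m`), i.e. `σ = f * finRotate n * f⁻¹`, let `π` be arbitrary and
`D = σ * π⁻¹`.  For indices `1 ≤ i ≤ j < k ≤ l ≤ n - 1`, the block-interchange
of the (not necessarily adjacent) blocks `[s_i, s_j]` and `[s_k, s_l]`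
produces the `n`-cycle `σ' = (s_i s_k) * (s_{j+1} s_{l+1}) * σ`, and the new
vertical permutation is `τ = D⁻¹ * σ'`.  Then `C(π) - C(τ) ∈ {-2, 0, 2}`. -/
theorem blockInterchange_cycleCount_diff
    (n : ℕ) [NeZero n] (f π : Equiv.Perm (Fin n)) (i j k l : ℕ)
    (h1 : 1 ≤ i) (h2 : i ≤ j) (h3 : j < k) (h4 : k ≤ l) (h5 : l ≤ n - 1) :
    ((cycleCount π : ℤ) -
      (cycleCount
        (((f * finRotate n * f⁻¹) * π⁻¹)⁻¹ *
          (Equiv.swap (f (i : Fin n)) (f (k : Fin n)) *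
            Equiv.swap (f ((j + 1 : ℕ) : Fin n)) (f ((l + 1 : ℕ) : Fin n)) *
              (f * finRotate n * f⁻¹)) ) : ℤ)) ∈ ({-2, 0, 2} : Set ℤ) := by
  have hn : 1 ≤ n := Nat.one_le_iff_ne_zero.mpr (NeZero.ne n)
  have hln : l < n := by omega
  have hkn : k < n := by omega
  have hin : i < n := by omega
  have hjn : j + 1 < n := by omega
  set σ : Equiv.Perm (Fin n) := f * finRotate n * f⁻¹ with hσ
  set a := f (i : Fin n) with ha
  set b := f (k : Fin n) with hb
  set c := f ((j + 1 : ℕ) : Fin n) with hc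
  set d := f ((l + 1 : ℕ) : Fin n) with hd
  have hab : a ≠ b := by
    rw [ha, hb]
    intro h
    have h' := congrArg Fin.val (f.injective h)
    rw [Fin.val_cast_of_lt hin, Fin.val_cast_of_lt hkn] at h'
    omega
  have hcd : c ≠ d := by
    rw [hc, hd]
    intro h
    have h' := f.injective h
    rcases lt_or_eq_of_le (Nat.succ_le_of_lt hln) with hl2 | hl2
    · have h'' := congrArg Fin.val h'
      rw [Fin.val_cast_of_lt hjn, Fin.val_cast_of_lt hl2] at h''
      omega
    · have hl1 : l + 1 = n := by omega
      have h'' := congrArg Fin.val h'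
      rw [Fin.val_cast_of_lt hjn, Fin.val_natCast, hl1, Nat.mod_self] at h''
      omega
  set τ : Equiv.Perm (Fin n) :=
    (σ * π⁻¹)⁻¹ * (Equiv.swap a b * Equiv.swap c d * σ) with hτ
  have hab' : σ⁻¹ a ≠ σ⁻¹ b := fun h => hab (σ⁻¹.injective h)
  have hcd' : σ⁻¹ c ≠ σ⁻¹ d := fun h => hcd (σ⁻¹.injective h)
  have hτ' : τ = (π * Equiv.swap (σ⁻¹ a) (σ⁻¹ b)) * Equiv.swap (σ⁻¹ c) (σ⁻¹ d) := by
    rw [hτ, Equiv.swap_apply_apply σ⁻¹ a b, Equiv.swap_apply_apply σ⁻¹ c d]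
    group
  -- the bounds
  have bnd1 : cycleCount τ ≤ cycleCount π + 2 := by
    rw [hτ']
    calc cycleCount ((π * Equiv.swap (σ⁻¹ a) (σ⁻¹ b)) * Equiv.swap (σ⁻¹ c) (σ⁻¹ d)) ≤
        cycleCount (π * Equiv.swap (σ⁻¹ a) (σ⁻¹ b)) + 1 := mul_swap_cycleCount_le _ _ _
      _ ≤ (cycleCount π + 1) + 1 := by
          exact Nat.add_le_add_right (mul_swap_cycleCount_le _ _ _) 1
      _ = cycleCount π + 2 := by omega
  have bnd2 : cycleCount π ≤ cycleCount τ + 2 := by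
    rw [hτ']
    calc cycleCount π ≤ cycleCount (π * Equiv.swap (σ⁻¹ a) (σ⁻¹ b)) + 1 :=
        cycleCount_le_mul_swap _ _ _
      _ ≤ (cycleCount ((π * Equiv.swap (σ⁻¹ a) (σ⁻¹ b)) * Equiv.swap (σ⁻¹ c) (σ⁻¹ d)) + 1) + 1 :=
          Nat.add_le_add_right (cycleCount_le_mul_swap _ _ _) 1
      _ = cycleCount ((π * Equiv.swap (σ⁻¹ a) (σ⁻¹ b)) * Equiv.swap (σ⁻¹ c) (σ⁻¹ d)) + 2 := by
          omega
  -- parity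
  have hsign : Equiv.Perm.sign π = Equiv.Perm.sign τ := by
    rw [hτ', map_mul, map_mul, Equiv.Perm.sign_swap hab', Equiv.Perm.sign_swap hcd']
    simp
  have heven := even_cycleCount_sub_of_sign_eq hsign
  obtain ⟨m, hm⟩ := heven
  simp only [Set.mem_insert_iff, Set.mem_singleton_iff]
  omega
end

section
/- A rooted one-face map with n edges and genus g, viewed as a plane permutation p = (s, π) on [2n] whose diagonal D_p = s ∘ π⁻¹ is a fixed-point-free involution and whose vertical permutation π has n + 1 - 2g cycles, has exactly 2g non-trivial anti-exceedances (trisection lemma). -/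
open Finset Equiv

/-- Anti-exceedance count: if `x ↦ φ⁻¹ x + 1` is a fixed-point-free involution on
`Fin N`, then the number of `i` with `φ i ≤ i` is `(N + 2) / 2`. -/
lemma ae_count (N : ℕ) [NeZero N] (hN : 0 < N) (φ : Equiv.Perm (Fin N))
    (hinv : ∀ x : Fin N, φ⁻¹ (φ⁻¹ x + 1) + 1 = x)
    (hfpf : ∀ x : Fin N, φ⁻¹ x + 1 ≠ x) :
    2 * (Finset.univ.filter fun i => φ i ≤ i).card = N + 2 := by
  obtain ⟨m, rfl⟩ : ∃ m, N = m + 1 := ⟨N - 1, by omega⟩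
  classical
  -- reindex via φ
  have hcard1 : (Finset.univ.filter fun i : Fin (m + 1) => φ i ≤ i).card
      = (Finset.univ.filter fun x : Fin (m + 1) => x ≤ φ⁻¹ x).card := by
    apply Finset.card_bij (fun i _ => φ i)
    · intro i hi
      simp only [mem_filter, mem_univ, true_and] at hi ⊢
      simpa using hi
    · intro a _ b _ h
      exact φ.injective h
    · intro x hx
      simp only [mem_filter, mem_univ, true_and] at hx
      refine ⟨φ⁻¹ x, ?_, by simp⟩
      simp only [mem_filter, mem_univ, true_and]
      simpa using hx
  -- split the condition
  have hsplit : ∀ x : Fin (m + 1), (x ≤ φ⁻¹ x) ↔ (φ⁻¹ x + 1 = 0 ∨ x < φ⁻¹ x + 1) := by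
    intro x
    rcases eq_or_ne (φ⁻¹ x) (Fin.last m) with h | h
    · simp [h, Fin.last_add_one, Fin.le_last]
    · have hv : (φ⁻¹ x + 1).val = (φ⁻¹ x).val + 1 := by
        rw [Fin.val_add_one]; simp [h]; exact h
      have h0 : φ⁻¹ x + 1 ≠ 0 := by
        intro h0
        rw [h0] at hv
        simp at hv
      constructor
      · intro hle
        right
        rw [Fin.lt_def, hv]
        exact Nat.lt_succ_of_le (Fin.le_def.mp hle)
      · rintro (h0' | hlt)
        · exact absurd h0' h0
        · rw [Fin.lt_def, hv] at hlt
          rw [Fin.le_def]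
          omega
  have hsetsplit : (Finset.univ.filter fun x : Fin (m + 1) => x ≤ φ⁻¹ x)
      = (Finset.univ.filter fun x => φ⁻¹ x + 1 = 0)
        ∪ (Finset.univ.filter fun x => x < φ⁻¹ x + 1) := by
    rw [← Finset.filter_or]
    exact Finset.filter_congr fun x _ => by simpa using hsplit x
  have hdisj : Disjoint (Finset.univ.filter fun x : Fin (m + 1) => φ⁻¹ x + 1 = 0)
      (Finset.univ.filter fun x => x < φ⁻¹ x + 1) := by
    rw [Finset.disjoint_left]
    intro x hx hx'
    simp only [mem_filter, mem_univ, true_and] at hx hx'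
    rw [hx] at hx'
    exact Fin.not_lt_zero x hx'
  -- the zero fiber has exactly one element
  have hzero : (Finset.univ.filter fun x : Fin (m + 1) => φ⁻¹ x + 1 = 0).card = 1 := by
    have he : ∀ x : Fin (m + 1), (φ⁻¹ x + 1 = 0) ↔ x = φ (-1) := by
      intro x
      constructor
      · intro h
        have h1 : φ⁻¹ x = -1 := eq_neg_of_add_eq_zero_left h
        have := congrArg φ h1
        simpa using this
      · rintro rfl
        simp
    rw [Finset.filter_congr fun x _ => by simpa using he x, Finset.filter_eq']
    simp
  -- ascent/descent pairing
  set U : Finset (Fin (m + 1)) := Finset.univ.filter fun x => x < φ⁻¹ x + 1 with hU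
  set V : Finset (Fin (m + 1)) := Finset.univ.filter fun x => φ⁻¹ x + 1 < x with hV
  have hUV : U.card = V.card := by
    apply Finset.card_bij (fun x _ => φ⁻¹ x + 1)
    · intro x hx
      simp only [hU, hV, mem_filter, mem_univ, true_and] at hx ⊢
      rwa [hinv x]
    · intro a _ b _ h
      have h2 := congrArg (fun y => φ⁻¹ y + 1) h
      rw [hinv a, hinv b] at h2
      exact h2
    · intro y hy
      simp only [hV, mem_filter, mem_univ, true_and] at hy
      refine ⟨φ⁻¹ y + 1, ?_, hinv y⟩
      simp only [hU, mem_filter, mem_univ, true_and]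
      rwa [hinv y]
  have hdisjUV : Disjoint U V := by
    rw [Finset.disjoint_left]
    intro x hx hx'
    simp only [hU, hV, mem_filter, mem_univ, true_and] at hx hx'
    exact absurd (hx.trans hx') (lt_irrefl x)
  have hunionUV : U ∪ V = Finset.univ := by
    rw [hU, hV, ← Finset.filter_or]
    refine Finset.filter_true_of_mem fun x _ => ?_
    rcases (hfpf x).lt_or_gt with h | h
    · exact Or.inr h
    · exact Or.inl h
  have hsum : U.card + V.card = m + 1 := by
    rw [← Finset.card_union_of_disjoint hdisjUV, hunionUV, Finset.card_univ, Fintype.card_fin]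
  have hfinal : (Finset.univ.filter fun x : Fin (m + 1) => x ≤ φ⁻¹ x).card = 1 + U.card := by
    rw [hsetsplit, Finset.card_union_of_disjoint hdisj, hzero]
  omega

/-- In each cycle there is an element minimizing `f.symm`. -/
lemma exists_cycle_min {N : ℕ} (π f : Equiv.Perm (Fin N)) (z : Fin N) :
    ∃ w, π.SameCycle z w ∧ ∀ y, π.SameCycle w y → f.symm w ≤ f.symm y := by
  classical
  obtain ⟨w, hw, hmin⟩ := Finset.exists_min_image
    (Finset.univ.filter fun y => π.SameCycle z y) (fun y => f.symm y)
    ⟨z, by simp [Equiv.Perm.SameCycle.refl]⟩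
  simp only [mem_filter, mem_univ, true_and] at hw
  refine ⟨w, hw, fun y hy => hmin y ?_⟩
  simp only [mem_filter, mem_univ, true_and]
  exact hw.trans hy

lemma cycle_min_unique {N : ℕ} (π f : Equiv.Perm (Fin N)) {w w' : Fin N}
    (hw : ∀ y, π.SameCycle w y → f.symm w ≤ f.symm y)
    (hw' : ∀ y, π.SameCycle w' y → f.symm w' ≤ f.symm y)
    (h : π.SameCycle w w') : w = w' :=
  f.symm.injective (le_antisymm (hw _ h) (hw' _ h.symm))

/-- The number of cycle-minimal elements equals the number of cycles. -/
lemma min_card {N : ℕ} (π f : Equiv.Perm (Fin N)) :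
    (Finset.univ.filter fun z : Fin N =>
      ∀ y, π.SameCycle z y → f.symm z ≤ f.symm y).card = cycleCount π := by
  classical
  set Min : Finset (Fin N) := Finset.univ.filter fun z =>
      ∀ y, π.SameCycle z y → f.symm z ≤ f.symm y with hMin
  -- fixed points are minimal in their (singleton) cycles
  have hfixcycle : ∀ z : Fin N, π z = z → ∀ y, π.SameCycle z y → y = z := by
    rintro z hz y ⟨k, hk⟩
    rw [← hk, Equiv.Perm.zpow_apply_eq_self_of_apply_eq_self hz]
  have hfix : ∀ z : Fin N, z ∉ π.support → z ∈ Min := by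
    intro z hz
    rw [Equiv.Perm.notMem_support] at hz
    simp only [hMin, mem_filter, mem_univ, true_and]
    intro y hy
    rw [hfixcycle z hz y hy]
  -- split Min into fixed points and support part
  have hsplit : (Min.filter fun z => z ∉ π.support).card
      + (Min.filter fun z => z ∈ π.support).card = Min.card := by
    have := Finset.card_filter_add_card_filter_not
      (s := Min) (p := fun z => z ∉ π.support)
    simpa using this
  have hpart1 : (Min.filter fun z => z ∉ π.support) = π.supportᶜ := by
    ext z
    simp only [mem_filter, Finset.mem_compl]
    constructor
    · exact fun h => h.2
    · exact fun h => ⟨hfix z h, h⟩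
  have hpart1card : (Min.filter fun z => z ∉ π.support).card
      = Fintype.card (Fin N) - π.support.card := by
    rw [hpart1, Finset.card_compl]
  -- the support part is in bijection with the cycle factors
  have hpart2 : (Min.filter fun z => z ∈ π.support).card = π.cycleFactorsFinset.card := by
    apply Finset.card_bij (fun z _ => π.cycleOf z)
    · intro z hz
      simp only [mem_filter] at hz
      exact Equiv.Perm.cycleOf_mem_cycleFactorsFinset_iff.mpr hz.2
    · intro a ha b hb h
      simp only [mem_filter, hMin, mem_univ, true_and] at ha hb
      have hbmem : b ∈ (π.cycleOf b).support :=
        Equiv.Perm.mem_support_cycleOf_iff.mpr ⟨Equiv.Perm.SameCycle.refl _ _, hb.2⟩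
      rw [← h] at hbmem
      have hab : π.SameCycle a b := (Equiv.Perm.mem_support_cycleOf_iff.mp hbmem).1
      exact cycle_min_unique π f ha.1 hb.1 hab
    · intro c hc
      obtain ⟨x, hx, -⟩ := (Equiv.Perm.mem_cycleFactorsFinset_iff.mp hc).1
      have hxc : x ∈ c.support := Equiv.Perm.mem_support.mpr hx
      have hcx : c = π.cycleOf x := Equiv.Perm.cycle_is_cycleOf hxc hc
      have hxs : x ∈ π.support := by
        rw [hcx] at hc
        exact Equiv.Perm.cycleOf_mem_cycleFactorsFinset_iff.mp hc
      obtain ⟨w, hxw, hwmin⟩ := exists_cycle_min π f x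
      have hws : w ∈ π.support := by
        rw [Equiv.Perm.mem_support]
        intro hw
        have := hfixcycle w hw x hxw.symm
        rw [Equiv.Perm.mem_support, this] at hxs
        exact hxs hw
      refine ⟨w, ?_, ?_⟩
      · simp only [mem_filter, hMin, mem_univ, true_and]
        exact ⟨hwmin, hws⟩
      · rw [hcx, Equiv.Perm.SameCycle.cycleOf_eq hxw]
  -- count cycles
  have hct : π.cycleType.sum = π.support.card := Equiv.Perm.sum_cycleType π
  have hcc : π.cycleType.card = π.cycleFactorsFinset.card := by
    rw [Equiv.Perm.cycleType_def, Multiset.card_map]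
    rfl
  have hle : π.support.card ≤ Fintype.card (Fin N) := Finset.card_le_univ _
  rw [cycleCount, hct, hcc]
  omega

/-- **Trisection lemma.**  Let `p = (s, π)` be a plane permutation on `[2n]`
given by a listing `f` (`s_i = f i`, `s = f * finRotate (2n) * f⁻¹`), whose
diagonal `D = s * π⁻¹` is a fixed-point-free involution and whose vertical
permutation `π` has `n + 1 - 2g` cycles.  A position `i` is an anti-exceedance
if `s_i ≥_s π (s_i)`, and it is non-trivial (an NTAE) if moreover `π (s_i)` is
not the `<_s`-minimal element of its `π`-cycle.  Then `p` has exactly `2g`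
NTAEs. -/
theorem trisection_lemma
    (n g : ℕ) (hn : 0 < n) (f π : Equiv.Perm (Fin (2 * n)))
    (hD1 : ((f * finRotate (2 * n) * f⁻¹) * π⁻¹) *
             ((f * finRotate (2 * n) * f⁻¹) * π⁻¹) = 1)
    (hD2 : ∀ x, ((f * finRotate (2 * n) * f⁻¹) * π⁻¹) x ≠ x)
    (hπ : cycleCount π + 2 * g = n + 1) :
    {i : Fin (2 * n) |
        f.symm (π (f i)) ≤ i ∧
        ∃ y, π.SameCycle (π (f i)) y ∧ f.symm y < f.symm (π (f i))}.ncard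
      = 2 * g := by
  classical
  haveI : NeZero (2 * n) := ⟨by omega⟩
  have hN : 0 < 2 * n := by omega
  have hrot' : ∀ x : Fin (2 * n), finRotate (2 * n) x = x + 1 := by
    have key : ∀ (N : ℕ) (inst : NeZero N) (x : Fin N), finRotate N x = x + 1 := by
      intro N inst x
      obtain ⟨m, rfl⟩ : ∃ m, N = m + 1 := ⟨N - 1, by have := inst.out; omega⟩
      exact finRotate_succ_apply x
    exact key (2 * n) ‹_›
  set φ : Equiv.Perm (Fin (2 * n)) := f⁻¹ * π * f with hφ
  have hφinv : φ⁻¹ = f⁻¹ * π⁻¹ * f := by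
    rw [hφ]; group
  have hφapp : ∀ i, φ i = f.symm (π (f i)) := fun i => rfl
  have hconj : f⁻¹ * ((f * finRotate (2 * n) * f⁻¹) * π⁻¹) * f
      = finRotate (2 * n) * φ⁻¹ := by
    rw [hφinv]; group
  have hψx : ∀ y : Fin (2 * n), (finRotate (2 * n) * φ⁻¹) y = φ⁻¹ y + 1 := by
    intro y
    show finRotate (2 * n) (φ⁻¹ y) = φ⁻¹ y + 1
    exact hrot' _
  have hψψ : (finRotate (2 * n) * φ⁻¹) * (finRotate (2 * n) * φ⁻¹) = 1 := by
    rw [← hconj]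
    have : (f⁻¹ * ((f * finRotate (2 * n) * f⁻¹) * π⁻¹) * f)
        * (f⁻¹ * ((f * finRotate (2 * n) * f⁻¹) * π⁻¹) * f)
        = f⁻¹ * (((f * finRotate (2 * n) * f⁻¹) * π⁻¹)
            * ((f * finRotate (2 * n) * f⁻¹) * π⁻¹)) * f := by group
    rw [this, hD1]; group
  have hinv : ∀ x : Fin (2 * n), φ⁻¹ (φ⁻¹ x + 1) + 1 = x := by
    intro x
    have h := congrArg (fun σ : Equiv.Perm (Fin (2 * n)) => σ x) hψψ
    simp only [Equiv.Perm.mul_apply, Equiv.Perm.one_apply] at h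
    have h1 : (finRotate (2 * n) * φ⁻¹) ((finRotate (2 * n) * φ⁻¹) x) = x := h
    rw [hψx x, hψx _] at h1
    exact h1
  have hfpf : ∀ x : Fin (2 * n), φ⁻¹ x + 1 ≠ x := by
    intro x hx
    apply hD2 (f x)
    have h1 : (f⁻¹ * ((f * finRotate (2 * n) * f⁻¹) * π⁻¹) * f) x = x := by
      rw [hconj]
      exact (hψx x).trans hx
    have h2 : f⁻¹ (((f * finRotate (2 * n) * f⁻¹) * π⁻¹) (f x)) = x := h1
    have h3 := congrArg f h2
    simpa using h3
  -- anti-exceedance count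
  have hAE := ae_count (2 * n) hN φ hinv hfpf
  set S : Finset (Fin (2 * n)) := Finset.univ.filter fun i => φ i ≤ i with hS
  have hScard : S.card = n + 1 := by omega
  -- trivial anti-exceedances
  set Min : Finset (Fin (2 * n)) := Finset.univ.filter fun z =>
      ∀ y, π.SameCycle z y → f.symm z ≤ f.symm y with hMin
  have hMincard : Min.card = cycleCount π := min_card π f
  set B : Finset (Fin (2 * n)) := Finset.univ.filter fun i => π (f i) ∈ Min with hB
  have hBcard : B.card = Min.card := by
    apply Finset.card_bij (fun i _ => π (f i))
    · intro i hi
      simp only [hB, mem_filter, mem_univ, true_and] at hi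
      exact hi
    · intro a _ b _ h
      exact f.injective (π.injective h)
    · intro z hz
      refine ⟨f.symm (π.symm z), ?_, by simp⟩
      simp only [hB, mem_filter, mem_univ, true_and]
      simpa using hz
  have hBS : B ⊆ S := by
    intro i hi
    simp only [hB, hMin, mem_filter, mem_univ, true_and] at hi
    simp only [hS, mem_filter, mem_univ, true_and]
    have hsc : π.SameCycle (π (f i)) (f i) := ⟨-1, by simp⟩
    have := hi (f i) hsc
    simpa [hφapp] using this
  -- the NTAE set as a finset
  have hset : {i : Fin (2 * n) |
        f.symm (π (f i)) ≤ i ∧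
        ∃ y, π.SameCycle (π (f i)) y ∧ f.symm y < f.symm (π (f i))}
      = ↑(S \ B) := by
    ext i
    simp only [Set.mem_setOf_eq, Finset.coe_sdiff, Set.mem_diff, Finset.mem_coe,
      hS, hB, hMin, mem_filter, mem_univ, true_and]
    constructor
    · rintro ⟨h1, y, hy1, hy2⟩
      refine ⟨by simpa [hφapp] using h1, fun h => ?_⟩
      exact absurd (h y hy1) (not_le.mpr hy2)
    · rintro ⟨h1, h2⟩
      push_neg at h2
      obtain ⟨y, hy1, hy2⟩ := h2
      exact ⟨by simpa [hφapp] using h1, y, hy1, hy2⟩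
  rw [hset, Set.ncard_coe_finset, Finset.card_sdiff_of_subset hBS, hScard, hBcard, hMincard]
  omega
end

section
/- The total number of exceedances over all permutations of [n] with exactly k cycles equals binomial(n, 2) · C(n-1, k). -/
/-- Unsigned Stirling number of the first kind. -/
def stirling1 (n k : ℕ) : ℕ :=
  (Finset.univ.filter (fun σ : Equiv.Perm (Fin n) => cycleCount σ = k)).card

open Equiv Equiv.Perm Finset

section Insertion

variable {α : Type*} [DecidableEq α] [Fintype α]

/-- Multiplying a cycle by a transposition inserting a new element `a` gives a cycle,
whose support gains `a`. -/
lemma isCycle_swap_mul_of_isCycle {c : Equiv.Perm α} (hc : c.IsCycle) {a b : α}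
    (hb : b ∈ c.support) (ha : a ∉ c.support) :
    (Equiv.swap a b * c).IsCycle ∧ (Equiv.swap a b * c).support = insert a c.support := by
  have hca : c a = a := by simpa using ha
  have hab : a ≠ b := by rintro rfl; exact ha hb
  have hcb : c b ≠ b := Equiv.Perm.mem_support.mp hb
  set g := Equiv.swap a b * c with hg
  have hga : g a = b := by simp [hg, Equiv.Perm.mul_apply, hca]
  have hkey : ∀ x, x ≠ a → c x ≠ b → g x = c x := by
    intro x hxa hxb
    have hcxa : c x ≠ a := fun h => hxa (c.injective (h.trans hca.symm))
    simp [hg, Equiv.Perm.mul_apply, Equiv.swap_apply_of_ne_of_ne hcxa hxb]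
  have hsupp : g.support = insert a c.support := by
    ext x
    rw [Finset.mem_insert]
    simp only [Equiv.Perm.mem_support]
    rcases eq_or_ne x a with rfl | hxa
    · simp [hga, hab.symm]
    · rcases eq_or_ne (c x) b with hcx | hcx
      · have hx : c x ≠ x := by
          intro h
          have hxb : x = b := by rw [← hcx, h]
          subst hxb
          exact hcb h
        have hgx : g x = a := by
          rw [hg, Equiv.Perm.mul_apply, hcx, Equiv.swap_apply_right]
        constructor
        · intro _; exact Or.inr hx
        · intro _; rw [hgx]; exact Ne.symm hxa
      · rw [hkey x hxa hcx]
        constructor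
        · exact fun h => Or.inr h
        · rintro (h | h)
          · exact absurd h hxa
          · exact h
  have hcyc : g.IsCycle := by
    refine ⟨a, by rw [hga]; exact hab.symm, ?_⟩
    have step : ∀ i : ℕ, g.SameCycle a ((c ^ i) b) := by
      intro i
      induction i with
      | zero => exact ⟨1, by simpa using hga⟩
      | succ i ih =>
        have hmem : (c ^ i) b ∈ c.support := Equiv.Perm.pow_apply_mem_support.mpr hb
        have hrec : (c ^ (i + 1)) b = c ((c ^ i) b) := by
          rw [pow_succ', Equiv.Perm.mul_apply]
        rcases eq_or_ne (c ((c ^ i) b)) b with h | h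
        · rw [hrec, h]; exact ⟨1, by simpa using hga⟩
        · have hza : (c ^ i) b ≠ a := fun hh => ha (hh ▸ hmem)
          have hgi : g ((c ^ i) b) = c ((c ^ i) b) := hkey _ hza h
          rw [hrec]
          exact ih.trans ⟨1, by simpa using hgi⟩
    intro y hy
    have : y ∈ g.support := Equiv.Perm.mem_support.mpr hy
    rw [hsupp, Finset.mem_insert] at this
    rcases this with rfl | h
    · exact Equiv.Perm.SameCycle.refl _ _
    · have hbz : c.SameCycle b y := hc.sameCycle hcb (Equiv.Perm.mem_support.mp h)
      obtain ⟨i, _, hi⟩ := hbz.exists_pow_eq'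
      rw [← hi]
      exact step i
  exact ⟨hcyc, hsupp⟩

/-- Multiplying a permutation fixing `a` by `swap a b` merges cycles:
the cycle count goes down by one. -/
lemma cycleCount_swap_mul {σ : Equiv.Perm α} {a b : α} (ha : σ a = a) (hab : a ≠ b) :
    cycleCount (Equiv.swap a b * σ) + 1 = cycleCount σ := by
  have hasupp : a ∉ σ.support := by simp [ha]
  rcases eq_or_ne (σ b) b with hb | hb
  · -- b is also fixed: the product adds a fresh 2-cycle
    have hdisj : (Equiv.swap a b).Disjoint σ := by
      intro x
      rcases eq_or_ne x a with rfl | hxa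
      · exact Or.inr ha
      rcases eq_or_ne x b with rfl | hxb
      · exact Or.inr hb
      · exact Or.inl (Equiv.swap_apply_of_ne_of_ne hxa hxb)
    have hct : (Equiv.swap a b * σ).cycleType = (Equiv.swap a b).cycleType + σ.cycleType :=
      hdisj.cycleType_mul
    have hsw : (Equiv.swap a b).cycleType = {2} := by
      rw [(Equiv.Perm.isCycle_swap hab).cycleType, Equiv.Perm.card_support_swap hab]
    have hle : σ.support.card + 2 ≤ Fintype.card α := by
      have hsub : σ.support ⊆ Finset.univ \ {a, b} := by
        intro x hx
        simp only [Finset.mem_sdiff, Finset.mem_univ, true_and, Finset.mem_insert,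
          Finset.mem_singleton]
        rintro (rfl | rfl)
        · exact hasupp hx
        · exact (Equiv.Perm.mem_support.mp hx) hb
      have hle' := Finset.card_le_card hsub
      have h2 : ({a, b} : Finset α).card = 2 := by
        rw [Finset.card_insert_of_notMem (by simpa using hab), Finset.card_singleton]
      have hcard : 2 ≤ Fintype.card α := by
        have := Finset.card_le_univ ({a, b} : Finset α)
        rwa [h2] at this
      have hsd : (Finset.univ \ {a, b} : Finset α).card = Fintype.card α - 2 := by
        rw [Finset.card_sdiff_of_subset (Finset.subset_univ _), Finset.card_univ, h2]
      rw [hsd] at hle'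
      omega
    unfold cycleCount
    rw [hct, hsw, Multiset.sum_add, Multiset.card_add]
    simp only [Multiset.sum_singleton, Multiset.card_singleton]
    rw [Equiv.Perm.sum_cycleType]
    omega
  · -- b is moved: insert a into b's cycle
    set C := σ.cycleOf b with hC
    have hCcyc : C.IsCycle := σ.isCycle_cycleOf hb
    have hCb : b ∈ C.support := by
      rw [Equiv.Perm.mem_support, Equiv.Perm.cycleOf_apply_self]; exact hb
    have hCa : a ∉ C.support := fun h => hasupp (σ.support_cycleOf_le b h)
    set d := C⁻¹ * σ with hd
    have hσ : σ = C * d := by rw [hd]; group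
    have hdisj : C.Disjoint d := by
      intro x
      by_cases hx : σ.SameCycle b x
      · right
        have : C x = σ x := hx.cycleOf_apply
        have hx' : σ.SameCycle b (σ x) := hx.trans ⟨1, rfl⟩
        have h2 : C (σ x) = σ (σ x) := hx'.cycleOf_apply
        rw [hd, Equiv.Perm.mul_apply]
        exact C.injective (by rw [← Equiv.Perm.mul_apply, mul_inv_cancel, Equiv.Perm.one_apply, this])
      · left; exact Equiv.Perm.cycleOf_apply_of_not_sameCycle hx
    obtain ⟨hgcyc, hgsupp⟩ := isCycle_swap_mul_of_isCycle hCcyc hCb hCa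
    set g := Equiv.swap a b * C with hg
    have hda : d a = a := by
      have hCainv : C⁻¹ a = a := by
        rw [Equiv.Perm.inv_eq_iff_eq]; symm; simpa using hCa
      rw [hd, Equiv.Perm.mul_apply, ha, hCainv]
    have hgd : g.Disjoint d := by
      intro x
      by_cases hx : x ∈ g.support
      · right
        rw [hgsupp, Finset.mem_insert] at hx
        rcases hx with rfl | hx
        · exact hda
        · rcases hdisj x with h | h
          · exact absurd h (Equiv.Perm.mem_support.mp hx)
          · exact h
      · left; simpa using hx
    have hprod : Equiv.swap a b * σ = g * d := by rw [hg, hσ]; group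
    have hctσ : σ.cycleType = {C.support.card} + d.cycleType := by
      rw [hσ, hdisj.cycleType_mul, hCcyc.cycleType]
    have hctg : (Equiv.swap a b * σ).cycleType = {C.support.card + 1} + d.cycleType := by
      rw [hprod, hgd.cycleType_mul, hgcyc.cycleType, hgsupp,
        Finset.card_insert_of_notMem hCa]
    have hlt : σ.support.card < Fintype.card α := by
      have : σ.support ⊂ Finset.univ := by
        refine Finset.ssubset_univ_iff.mpr ?_
        intro h; rw [h] at hasupp; exact hasupp (Finset.mem_univ a)
      simpa [Finset.card_univ] using Finset.card_lt_card this
    have e1 : (Equiv.swap a b * σ).cycleType.sum = C.support.card + 1 + d.cycleType.sum := by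
      rw [hctg]; simp
    have e2 : Multiset.card (Equiv.swap a b * σ).cycleType = 1 + Multiset.card d.cycleType := by
      rw [hctg]; simp [add_comm]
    have e3 : σ.cycleType.sum = C.support.card + d.cycleType.sum := by
      rw [hctσ]; simp
    have e4 : Multiset.card σ.cycleType = 1 + Multiset.card d.cycleType := by
      rw [hctσ]; simp [add_comm]
    have h5 : C.support.card + d.cycleType.sum < Fintype.card α := by
      rw [← e3, σ.sum_cycleType]; exact hlt
    unfold cycleCount
    rw [e1, e2, e3, e4]
    omega

end Insertion

/-- The equivalence between `Fin m` and the nonzero elements of `Fin (m+1)`. -/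
def finSuccNeZeroEquiv (m : ℕ) : Fin m ≃ {x : Fin (m + 1) // x ≠ 0} where
  toFun i := ⟨i.succ, i.succ_ne_zero⟩
  invFun x := x.1.pred x.2
  left_inv i := by simp
  right_inv x := by simp

lemma decomposeFin_symm_zero_eq_extendDomain {m : ℕ} (e : Equiv.Perm (Fin m)) :
    Equiv.Perm.decomposeFin.symm (0, e) = e.extendDomain (finSuccNeZeroEquiv m) := by
  refine Equiv.ext fun x => ?_
  refine Fin.cases ?_ ?_ x
  · rw [Equiv.Perm.decomposeFin_symm_apply_zero,
      Equiv.Perm.extendDomain_apply_not_subtype _ _ (by simp)]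
  · intro i
    rw [Equiv.Perm.decomposeFin_symm_apply_succ,
      Equiv.Perm.extendDomain_apply_subtype (b := i.succ) _ _ (i.succ_ne_zero)]
    simp [finSuccNeZeroEquiv]

lemma cycleCount_decomposeFin_symm_zero {m : ℕ} (e : Equiv.Perm (Fin m)) :
    cycleCount (Equiv.Perm.decomposeFin.symm (0, e)) = cycleCount e + 1 := by
  have hct : (Equiv.Perm.decomposeFin.symm (0, e)).cycleType = e.cycleType := by
    rw [decomposeFin_symm_zero_eq_extendDomain, Equiv.Perm.cycleType_extendDomain]
  have hsum : e.cycleType.sum ≤ m := by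
    rw [e.sum_cycleType]
    simpa using Finset.card_le_univ e.support
  unfold cycleCount
  rw [hct, Fintype.card_fin, Fintype.card_fin]
  omega

lemma cycleCount_decomposeFin_symm {m : ℕ} {p : Fin (m + 1)} (hp : p ≠ 0)
    (e : Equiv.Perm (Fin m)) :
    cycleCount (Equiv.Perm.decomposeFin.symm (p, e)) = cycleCount e := by
  have hdec : Equiv.Perm.decomposeFin.symm (p, e) =
      Equiv.swap 0 p * Equiv.Perm.decomposeFin.symm (0, e) := by
    refine Equiv.ext fun x => ?_
    refine Fin.cases ?_ ?_ x
    · simp [Equiv.Perm.mul_apply, Equiv.Perm.decomposeFin_symm_apply_zero]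
    · intro i
      simp [Equiv.Perm.mul_apply, Equiv.Perm.decomposeFin_symm_apply_succ]
  have h0 : Equiv.Perm.decomposeFin.symm (0, e) 0 = 0 :=
    Equiv.Perm.decomposeFin_symm_apply_zero 0 e
  have h1 := cycleCount_swap_mul (σ := Equiv.Perm.decomposeFin.symm (0, e)) h0 (Ne.symm hp)
  have h2 := cycleCount_decomposeFin_symm_zero e
  rw [hdec]
  omega

lemma first_apply_decomposeFin {m : ℕ} (σ : Equiv.Perm (Fin (m + 1))) :
    σ 0 = (Equiv.Perm.decomposeFin σ).1 := by
  conv_lhs => rw [← Equiv.Perm.decomposeFin.symm_apply_apply σ]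
  rcases h : Equiv.Perm.decomposeFin σ with ⟨p, e⟩
  exact Equiv.Perm.decomposeFin_symm_apply_zero p e

/-- The number of permutations of `Fin (m+1)` with `k` cycles sending `0` to a
fixed nonzero value `j` is `stirling1 m k`. -/
lemma card_fiber_zero (m k : ℕ) {j : Fin (m + 1)} (hj : j ≠ 0) :
    (Finset.univ.filter
      (fun σ : Equiv.Perm (Fin (m + 1)) => cycleCount σ = k ∧ σ 0 = j)).card =
    stirling1 m k := by
  rw [stirling1]
  refine Finset.card_nbij' (fun σ => (Equiv.Perm.decomposeFin σ).2)
    (fun e => Equiv.Perm.decomposeFin.symm (j, e)) ?_ ?_ ?_ ?_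
  · intro σ hσ
    rw [Finset.mem_coe, Finset.mem_filter] at hσ ⊢
    obtain ⟨-, hck, h0⟩ := hσ
    refine ⟨Finset.mem_univ _, ?_⟩
    have hfst : (Equiv.Perm.decomposeFin σ).1 = j := by
      rw [← first_apply_decomposeFin]; exact h0
    have hre : Equiv.Perm.decomposeFin.symm (j, (Equiv.Perm.decomposeFin σ).2) = σ := by
      rw [← hfst]; simp
    show cycleCount (Equiv.Perm.decomposeFin σ).2 = k
    rw [← hck, ← cycleCount_decomposeFin_symm hj ((Equiv.Perm.decomposeFin σ).2), hre]
  · intro e he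
    rw [Finset.mem_coe, Finset.mem_filter] at he ⊢
    refine ⟨Finset.mem_univ _, ?_, Equiv.Perm.decomposeFin_symm_apply_zero j e⟩
    rw [cycleCount_decomposeFin_symm hj]
    exact he.2
  · intro σ hσ
    rw [Finset.mem_coe, Finset.mem_filter] at hσ
    have hfst : (Equiv.Perm.decomposeFin σ).1 = j := by
      rw [← first_apply_decomposeFin]; exact hσ.2.2
    rw [← hfst]
    simp
  · intro e he
    simp

lemma cycleCount_conj {α : Type*} [Fintype α] [DecidableEq α] (g σ : Equiv.Perm α) :
    cycleCount (g * σ * g⁻¹) = cycleCount σ := by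
  unfold cycleCount
  rw [Equiv.Perm.cycleType_conj]

/-- The number of permutations of `Fin (m+1)` with `k` cycles sending `i` to `j ≠ i`
is `stirling1 m k`. -/
lemma card_fiber (m k : ℕ) {i j : Fin (m + 1)} (hij : i ≠ j) :
    (Finset.univ.filter
      (fun σ : Equiv.Perm (Fin (m + 1)) => cycleCount σ = k ∧ σ i = j)).card =
    stirling1 m k := by
  set g := Equiv.swap (0 : Fin (m + 1)) i with hg
  have hgj : g j ≠ 0 := by
    intro h
    apply hij
    have : g j = g i := by rw [h, hg, Equiv.swap_apply_right]
    exact (g.injective this).symm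
  rw [← card_fiber_zero m k hgj]
  refine Finset.card_nbij' (fun σ => g * σ * g⁻¹) (fun τ => g⁻¹ * τ * g) ?_ ?_ ?_ ?_
  · intro σ hσ
    simp only [Finset.mem_coe, Finset.mem_filter, Finset.mem_univ, true_and] at hσ ⊢
    obtain ⟨hck, hi⟩ := hσ
    refine ⟨by rw [cycleCount_conj]; exact hck, ?_⟩
    have hginv : g⁻¹ (0 : Fin (m + 1)) = i := by
      rw [hg, Equiv.swap_inv, Equiv.swap_apply_left]
    rw [Equiv.Perm.mul_apply, Equiv.Perm.mul_apply, hginv, hi]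
  · intro τ hτ
    simp only [Finset.mem_coe, Finset.mem_filter, Finset.mem_univ, true_and] at hτ ⊢
    obtain ⟨hck, h0⟩ := hτ
    refine ⟨?_, ?_⟩
    · have : g⁻¹ * τ * g = g⁻¹ * τ * g⁻¹⁻¹ := by rw [inv_inv]
      rw [this, cycleCount_conj]; exact hck
    · have hgi : g i = 0 := by rw [hg, Equiv.swap_apply_right]
      rw [Equiv.Perm.mul_apply, Equiv.Perm.mul_apply, hgi, h0]
      rw [Equiv.Perm.inv_eq_iff_eq]
  · intro σ _
    show g⁻¹ * (g * σ * g⁻¹) * g = σ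
    group
  · intro τ _
    show g * (g⁻¹ * τ * g) * g⁻¹ = τ
    group

lemma card_lt_pairs (n : ℕ) :
    (Finset.univ.filter (fun p : Fin n × Fin n => p.1 < p.2)).card = n.choose 2 := by
  rw [Finset.card_eq_sum_card_fiberwise
    (f := fun p : Fin n × Fin n => p.2) (t := Finset.univ) (fun p _ => Finset.mem_univ _)]
  have hfib : ∀ j : Fin n,
      ((Finset.univ.filter (fun p : Fin n × Fin n => p.1 < p.2)).filter
        (fun p => p.2 = j)).card = (j : ℕ) := by
    intro j
    rw [← Fin.card_Iio (b := j)]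
    refine Finset.card_nbij' (fun p => p.1) (fun i => (i, j)) ?_ ?_ ?_ ?_
    · intro p hp
      simp only [Finset.mem_coe, Finset.mem_filter, Finset.mem_univ, true_and] at hp
      rw [Finset.mem_coe, Finset.mem_Iio, ← hp.2]
      exact hp.1
    · intro i hi
      rw [Finset.mem_coe, Finset.mem_Iio] at hi
      simp [hi]
    · intro p hp
      simp only [Finset.mem_coe, Finset.mem_filter, Finset.mem_univ, true_and] at hp
      rw [← hp.2]
    · intro i _; rfl
  rw [Finset.sum_congr rfl (fun j _ => hfib j)]
  rw [Fin.sum_univ_eq_sum_range (fun i => i) n, Finset.sum_range_id]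
  rw [Nat.choose_two_right]

/-- The total number of exceedances (`i` with `π i > i`) over all permutations
of `[n]` with exactly `k` cycles equals `C(n, 2) · C(n-1, k)`. -/
theorem total_exceedances_eq (n k : ℕ) (hn : 1 ≤ n) :
    (∑ σ ∈ Finset.univ.filter
        (fun σ : Equiv.Perm (Fin n) => cycleCount σ = k),
      (Finset.univ.filter (fun i : Fin n => i < σ i)).card) =
    Nat.choose n 2 * stirling1 (n - 1) k := by
  obtain ⟨m, rfl⟩ : ∃ m, n = m + 1 := ⟨n - 1, (Nat.succ_pred_eq_of_pos hn).symm⟩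
  set P := Finset.univ.filter (fun p : Fin (m + 1) × Fin (m + 1) => p.1 < p.2) with hP
  have step1 : ∀ σ : Equiv.Perm (Fin (m + 1)),
      (Finset.univ.filter (fun i : Fin (m + 1) => i < σ i)).card =
      ∑ p ∈ P, if σ p.1 = p.2 then 1 else 0 := by
    intro σ
    rw [← Finset.card_filter]
    refine Finset.card_nbij' (fun i => (i, σ i)) (fun p => p.1) ?_ ?_ ?_ ?_
    · intro i hi
      simp only [Finset.mem_coe, Finset.mem_filter, Finset.mem_univ, true_and] at hi ⊢
      refine ⟨?_, by simp⟩
      simp only [hP, Finset.mem_filter, Finset.mem_univ, true_and]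
      exact hi
    · intro p hp
      simp only [hP, Finset.mem_coe, Finset.mem_filter, Finset.mem_univ, true_and] at hp ⊢
      rw [hp.2]; exact hp.1
    · intro i _; rfl
    · intro p hp
      simp only [hP, Finset.mem_coe, Finset.mem_filter, Finset.mem_univ, true_and] at hp
      exact Prod.ext rfl hp.2
  rw [Finset.sum_congr rfl (fun σ _ => step1 σ), Finset.sum_comm]
  have step2 : ∀ p ∈ P,
      (∑ σ ∈ Finset.univ.filter (fun σ : Equiv.Perm (Fin (m + 1)) => cycleCount σ = k),
        if σ p.1 = p.2 then 1 else 0) = stirling1 m k := by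
    intro p hp
    simp only [hP, Finset.mem_filter, Finset.mem_univ, true_and] at hp
    rw [← Finset.card_filter, Finset.filter_filter]
    exact card_fiber m k (ne_of_lt hp)
  rw [Finset.sum_congr rfl step2, Finset.sum_const, smul_eq_mul]
  rw [hP, card_lt_pairs]
  simp
end

section
/- For any permutation α of [n] with n ≥ 1, the maximum of |C(α ∘ γ) - C(γ)| over all permutations γ of [n] equals n - C(α), where C denotes the number of cycles of a permutation. -/
open Equiv Equiv.Perm Module

variable {n : ℕ}

/-- The subspace of vectors fixed by a permutation (constant on each cycle). -/
def fixSub (σ : Perm (Fin n)) : Submodule ℚ (Fin n → ℚ) where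
  carrier := {v | ∀ i, v (σ i) = v i}
  add_mem' := by intro a b ha hb i; simp [ha i, hb i]
  zero_mem' := by intro i; rfl
  smul_mem' := by intro c v hv i; simp [hv i]

lemma mem_fixSub {σ : Perm (Fin n)} {v : Fin n → ℚ} :
    v ∈ fixSub σ ↔ ∀ i, v (σ i) = v i := Iff.rfl

lemma fixSub_apply_inv {σ : Perm (Fin n)} {v : Fin n → ℚ} (hv : v ∈ fixSub σ) (i : Fin n) :
    v (σ⁻¹ i) = v i := by
  conv_rhs => rw [← (Equiv.apply_symm_apply σ i : σ (σ⁻¹ i) = i)]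
  exact (hv (σ⁻¹ i)).symm

lemma fixSub_zpow {σ : Perm (Fin n)} {v : Fin n → ℚ} (hv : v ∈ fixSub σ) (k : ℤ) :
    ∀ i : Fin n, v ((σ ^ k) i) = v i := by
  induction k using Int.induction_on with
  | zero => simp
  | succ k ih =>
      intro i
      have h1 : (σ ^ ((k : ℤ) + 1)) i = (σ ^ (k : ℤ)) (σ i) := by
        rw [zpow_add, zpow_one]; rfl
      rw [h1, ih (σ i), hv i]
  | pred k ih =>
      intro i
      have h1 : (σ ^ (-(k : ℤ) - 1)) i = (σ ^ (-(k : ℤ))) (σ⁻¹ i) := by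
        rw [sub_eq_add_neg, zpow_add, zpow_neg_one]; rfl
      rw [h1, ih (σ⁻¹ i), fixSub_apply_inv hv i]

lemma fixSub_inv (σ : Perm (Fin n)) : fixSub σ⁻¹ = fixSub σ := by
  ext v
  constructor
  · intro hv i
    conv_rhs => rw [← (Equiv.symm_apply_apply σ i : σ⁻¹ (σ i) = i)]
    exact (hv (σ i)).symm
  · intro hv i
    exact fixSub_apply_inv hv i

lemma fixSub_one : fixSub (1 : Perm (Fin n)) = ⊤ := by
  ext v; simp [mem_fixSub]

lemma fixSub_mul_le (α γ : Perm (Fin n)) : fixSub α ⊓ fixSub γ ≤ fixSub (α * γ) := by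
  rintro v ⟨ha, hg⟩ i
  show v (α (γ i)) = v i
  rw [ha (γ i), hg i]

lemma fix_constant_of_isCycle {c : Perm (Fin n)} (hc : c.IsCycle) {v : Fin n → ℚ}
    (hv : v ∈ fixSub c) {x y : Fin n} (hx : c x ≠ x) (hy : c y ≠ y) : v x = v y := by
  obtain ⟨k, hk⟩ := hc.exists_zpow_eq hx hy
  rw [← hk, fixSub_zpow hv]

/-- For a cycle, the fixed subspace is isomorphic to (functions on fixed points) × ℚ. -/
noncomputable def fixSubCycleEquiv {c : Perm (Fin n)} (hc : c.IsCycle)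
    {x₀ : Fin n} (hx₀ : c x₀ ≠ x₀) :
    (fixSub c) ≃ₗ[ℚ] ({ i : Fin n // c i = i } → ℚ) × ℚ where
  toFun v := (fun i => v.1 i, v.1 x₀)
  map_add' v w := rfl
  map_smul' a v := rfl
  invFun p := ⟨fun i => if h : c i = i then p.1 ⟨i, h⟩ else p.2, by
    intro i
    by_cases h : c i = i
    · rw [h]
    · have h2 : ¬ c (c i) = c i := fun hh => h (c.injective hh)
      simp [h, h2]⟩
  left_inv v := by
    apply Subtype.ext
    funext i
    by_cases h : c i = i
    · simp [h]
    · simp only [h, dif_neg, not_false_iff]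
      exact fix_constant_of_isCycle hc v.2 hx₀ h
  right_inv p := by
    ext i
    · simp [i.2]
    · simp [hx₀]

lemma card_fixed_of_cycle {c : Perm (Fin n)} :
    Fintype.card { i : Fin n // c i = i } = n - c.support.card := by
  have h1 : Fintype.card { i : Fin n // ¬ c i ≠ i } = n - Fintype.card { i : Fin n // c i ≠ i } := by
    rw [Fintype.card_subtype_compl, Fintype.card_fin]
  have h2 : Fintype.card { i : Fin n // c i ≠ i } = c.support.card := by
    rw [Fintype.card_subtype]
    rfl
  have h3 : Fintype.card { i : Fin n // c i = i } = Fintype.card { i : Fin n // ¬ c i ≠ i } :=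
    Fintype.card_congr (Equiv.subtypeEquivRight (by intro i; simp))
  rw [h3, h1, h2]

lemma finrank_fixSub_cycle {c : Perm (Fin n)} (hc : c.IsCycle) :
    finrank ℚ (fixSub c) = n - c.support.card + 1 := by
  obtain ⟨x₀, hx₀, -⟩ := id hc
  rw [(fixSubCycleEquiv hc hx₀).finrank_eq]
  rw [Module.finrank_prod, Module.finrank_pi, Module.finrank_self, card_fixed_of_cycle]

lemma fixSub_disjoint_mul {σ τ : Perm (Fin n)} (hd : Equiv.Perm.Disjoint σ τ) :
    fixSub (σ * τ) = fixSub σ ⊓ fixSub τ := by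
  apply le_antisymm
  · intro v hv
    have hτ : v ∈ fixSub τ := by
      intro i
      by_cases h : τ i = i
      · rw [h]
      · have h1 : σ (τ i) = τ i := by
          rcases hd (τ i) with h' | h'
          · exact h'
          · exact absurd (τ.injective h') h
        have h0 := hv i
        rw [show (σ * τ) i = σ (τ i) from rfl, h1] at h0
        exact h0
    refine ⟨?_, hτ⟩
    intro i
    by_cases h : σ i = i
    · rw [h]
    · have h1 : τ i = i := (hd i).resolve_left h
      have h0 := hv i
      rw [show (σ * τ) i = σ (τ i) from rfl, h1] at h0
      exact h0
  · exact fixSub_mul_le σ τ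

lemma fixSub_disjoint_sup {σ τ : Perm (Fin n)} (hd : Equiv.Perm.Disjoint σ τ) :
    fixSub σ ⊔ fixSub τ = ⊤ := by
  rw [eq_top_iff]
  intro v _
  have hστ : ∀ i, σ i ≠ i → τ i = i := fun i h => (hd i).resolve_left h
  have hτσ : ∀ i, τ i ≠ i → σ i = i := fun i h => (hd.symm i).resolve_left h
  refine Submodule.mem_sup.mpr ⟨fun i => if τ i = i then 0 else v i, ?_,
    fun i => if τ i = i then v i else 0, ?_, ?_⟩
  · intro i
    by_cases h : σ i = i
    · rw [h]
    · have h1 : τ i = i := hστ i h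
      have h2 : τ (σ i) = σ i := by
        by_contra h2
        exact h (σ.injective (hτσ (σ i) h2))
      simp only [h1, h2, if_pos]
  · intro i
    by_cases h : τ i = i
    · rw [h]
    · have h2 : ¬ τ (τ i) = τ i := fun hh => h (τ.injective hh)
      simp [h, h2]
  · funext i
    by_cases h : τ i = i <;> simp [h]

lemma finrank_fixSub (σ : Perm (Fin n)) : finrank ℚ (fixSub σ) = cycleCount σ := by
  induction σ using Equiv.Perm.cycle_induction_on with
  | base_one =>
      rw [fixSub_one, finrank_top, finrank_fintype_fun_eq_card, Fintype.card_fin]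
      simp [cycleCount, Equiv.Perm.cycleType_one]
  | base_cycles σ hσ =>
      rw [finrank_fixSub_cycle hσ]
      simp [cycleCount, hσ.cycleType, Fintype.card_fin]
  | induction_disjoint σ τ hd hσc hσ hτ =>
      have hsum := Submodule.finrank_sup_add_finrank_inf_eq (fixSub σ) (fixSub τ)
      rw [fixSub_disjoint_sup hd, finrank_top, finrank_fintype_fun_eq_card,
        Fintype.card_fin, hσ, hτ] at hsum
      rw [fixSub_disjoint_mul hd] at *
      have hcard : (σ * τ).support.card = σ.support.card + τ.support.card :=
        hd.card_support_mul
      have hle : (σ * τ).support.card ≤ n := by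
        simpa using Finset.card_le_univ (σ * τ).support
      have hsσ : σ.cycleType.sum = σ.support.card := Equiv.Perm.sum_cycleType σ
      have hsτ : τ.cycleType.sum = τ.support.card := Equiv.Perm.sum_cycleType τ
      have hct : (σ * τ).cycleType = σ.cycleType + τ.cycleType := Equiv.Perm.Disjoint.cycleType_mul hd
      simp only [cycleCount, hct, Multiset.sum_add, Multiset.card_add, Fintype.card_fin,
        hsσ, hsτ] at *
      omega

lemma finrank_fixSub_le (σ : Perm (Fin n)) : finrank ℚ (fixSub σ) ≤ n := by
  have h := Submodule.finrank_le (fixSub σ)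
  rwa [finrank_fintype_fun_eq_card, Fintype.card_fin] at h

lemma finrank_triangle (α γ : Perm (Fin n)) :
    finrank ℚ (fixSub α) + finrank ℚ (fixSub γ) ≤ n + finrank ℚ (fixSub (α * γ)) := by
  have h1 := Submodule.finrank_sup_add_finrank_inf_eq (fixSub α) (fixSub γ)
  have h2 : finrank ℚ ↥(fixSub α ⊔ fixSub γ) ≤ n := by
    have h := Submodule.finrank_le (fixSub α ⊔ fixSub γ)
    rwa [finrank_fintype_fun_eq_card, Fintype.card_fin] at h
  have h3 : finrank ℚ ↥(fixSub α ⊓ fixSub γ) ≤ finrank ℚ (fixSub (α * γ)) :=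
    Submodule.finrank_mono (fixSub_mul_le α γ)
  omega

/-- For any permutation `α` of `[n]`, `n ≥ 1`, the maximum of
`|C(α∘γ) - C(γ)|` over all permutations `γ` equals `n - C(α)`. -/
theorem max_cycleCount_diff (n : ℕ) (hn : 1 ≤ n) (α : Equiv.Perm (Fin n)) :
    IsGreatest {d : ℤ | ∃ γ : Equiv.Perm (Fin n),
        d = |(cycleCount (α * γ) : ℤ) - (cycleCount γ : ℤ)|}
      ((n : ℤ) - cycleCount α) := by
  have hCle : ∀ σ : Perm (Fin n), cycleCount σ ≤ n := by
    intro σ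
    rw [← finrank_fixSub]
    exact finrank_fixSub_le σ
  have hC1 : cycleCount (1 : Perm (Fin n)) = n := by
    simp [cycleCount, Equiv.Perm.cycleType_one]
  constructor
  · refine ⟨1, ?_⟩
    rw [mul_one, hC1, abs_sub_comm]
    have h := hCle α
    rw [abs_of_nonneg (sub_nonneg.mpr (by exact_mod_cast h))]
  · rintro d ⟨γ, rfl⟩
    have h1 : cycleCount α + cycleCount γ ≤ n + cycleCount (α * γ) := by
      have h := finrank_triangle α γ
      simpa only [finrank_fixSub] using h
    have h2 : cycleCount α + cycleCount (α * γ) ≤ n + cycleCount γ := by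
      have h := finrank_triangle α⁻¹ (α * γ)
      rw [fixSub_inv, inv_mul_cancel_left] at h
      simpa only [finrank_fixSub] using h
    have h1' : (cycleCount α : ℤ) + cycleCount γ ≤ (n : ℤ) + cycleCount (α * γ) := by
      exact_mod_cast h1
    have h2' : (cycleCount α : ℤ) + cycleCount (α * γ) ≤ (n : ℤ) + cycleCount γ := by
      exact_mod_cast h2
    rw [abs_sub_le_iff]
    constructor <;> linarith
end

section
/- For any two permutations α, γ of [n], |C(α ∘ γ) - C(γ)| ≤ n - C(α), where C denotes the number of cycles. -/
open Equiv Equiv.Perm Submodule Module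

variable {β : Type*} [Fintype β] [DecidableEq β]

/-- Setoid of the same-cycle relation. -/
def scSetoid (σ : Perm β) : Setoid β := ⟨σ.SameCycle, SameCycle.equivalence σ⟩

noncomputable def Lmap (σ : Perm β) : (β → ℚ) →ₗ[ℚ] (β → ℚ) := LinearMap.funLeft ℚ ℚ σ

noncomputable def Dmap (σ : Perm β) : (β → ℚ) →ₗ[ℚ] (β → ℚ) := Lmap σ - LinearMap.id

lemma mem_ker_Dmap {σ : Perm β} {f : β → ℚ} :
    f ∈ LinearMap.ker (Dmap σ) ↔ ∀ x, f (σ x) = f x := by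
  simp only [LinearMap.mem_ker, Dmap, Lmap, LinearMap.sub_apply, LinearMap.id_apply,
    LinearMap.funLeft_apply, funext_iff, Pi.sub_apply, Pi.zero_apply, sub_eq_zero]

set_option linter.unusedSectionVars false

/-- Classification map of same-cycle classes. -/
def classify (σ : Perm β) (x : β) : {x : β // σ x = x} ⊕ {c : Perm β // c ∈ σ.cycleFactorsFinset} :=
  if h : σ x = x then Sum.inl ⟨x, h⟩
  else Sum.inr ⟨σ.cycleOf x, (cycleOf_mem_cycleFactorsFinset_iff).2 (mem_support.2 h)⟩

lemma classify_eq_iff (σ : Perm β) (x y : β) :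
    classify σ x = classify σ y ↔ σ.SameCycle x y := by
  constructor
  · intro h
    unfold classify at h
    by_cases hx : σ x = x <;> by_cases hy : σ y = y <;>
      simp only [hx, hy, dif_pos, dif_neg, not_false_iff] at h
    · cases h; exact SameCycle.rfl
    · exact absurd h (by simp)
    · exact absurd h (by simp)
    · have hc : σ.cycleOf x = σ.cycleOf y := by simpa using h
      have hy' : y ∈ (σ.cycleOf x).support := by
        rw [hc, mem_support, cycleOf_apply_self]; exact hy
      exact (mem_support_cycleOf_iff.1 hy').1
  · intro h
    unfold classify
    by_cases hx : σ x = x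
    · have := h.eq_of_left hx; subst this; rfl
    · have hy : ¬ σ y = y := fun hy => hx (by
        have := h.symm.eq_of_left hy; subst this; exact hy)
      rw [dif_neg hx, dif_neg hy]
      simp [h.cycleOf_eq]

lemma classify_surjective (σ : Perm β) : Function.Surjective (classify σ) := by
  rintro (⟨x, hx⟩ | ⟨c, hc⟩)
  · exact ⟨x, by simp [classify, hx]⟩
  · obtain ⟨hcyc, happ⟩ := mem_cycleFactorsFinset_iff.1 hc
    obtain ⟨x, hx, -⟩ := hcyc
    have hxs : x ∈ c.support := mem_support.2 hx
    have hσx : ¬ σ x = x := by rw [← happ x hxs]; exact hx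
    refine ⟨x, ?_⟩
    unfold classify
    rw [dif_neg hσx]
    have := cycle_is_cycleOf hxs hc
    simp [← this]

/-- The quotient by the same-cycle relation. -/
noncomputable def scEquiv (σ : Perm β) :
    Quotient (scSetoid σ) ≃ ({x : β // σ x = x} ⊕ {c : Perm β // c ∈ σ.cycleFactorsFinset}) :=
  Equiv.ofBijective (Quotient.lift (classify σ) (fun x y h => (classify_eq_iff σ x y).2 h))
    ⟨fun a b => Quotient.inductionOn₂ a b (fun x y h =>
      Quotient.sound ((classify_eq_iff σ x y).1 h)),
     fun z => (classify_surjective σ z).elim (fun x hx => ⟨Quotient.mk _ x, hx⟩)⟩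

lemma card_quotient_eq (σ : Perm β) :
    Nat.card (Quotient (scSetoid σ)) = cycleCount σ := by
  rw [Nat.card_congr (scEquiv σ)]
  have h1 : Fintype.card {x : β // σ x = x} = Fintype.card β - σ.support.card := by
    have h := Finset.card_filter_add_card_filter_not (s := (Finset.univ : Finset β))
      (p := fun x => σ x = x)
    have hs : σ.support = Finset.univ.filter (fun x => ¬ σ x = x) := rfl
    rw [Fintype.card_subtype]
    rw [hs]
    rw [Finset.card_univ] at h
    omega
  have h2 : Multiset.card σ.cycleType = σ.cycleFactorsFinset.card := by
    rw [cycleType]; simp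
  have h3 : σ.support.card ≤ Fintype.card β := Finset.card_le_univ _
  simp only [Nat.card_eq_fintype_card, Fintype.card_sum, Fintype.card_coe, cycleCount,
    sum_cycleType, h1, h2]

lemma apply_zpow_eq {σ : Perm β} {f : β → ℚ} (hf : ∀ x, f (σ x) = f x) (i : ℤ) (x : β) :
    f ((σ ^ i) x) = f x := by
  have hinv : ∀ x, f (σ⁻¹ x) = f x := fun x => by
    conv_rhs => rw [← (show σ (σ⁻¹ x) = x by simp)]
    rw [hf]
  induction i using Int.induction_on with
  | zero => simp
  | succ k ih =>
      have : (σ ^ ((k : ℤ) + 1)) x = σ ((σ ^ (k : ℤ)) x) := by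
        rw [add_comm, zpow_one_add, Perm.mul_apply]
      rw [this, hf, ih]
  | pred k ih =>
      have : (σ ^ (-(k : ℤ) - 1)) x = σ⁻¹ ((σ ^ (-(k : ℤ))) x) := by
        rw [sub_eq_add_neg, add_comm, zpow_add, zpow_neg_one, Perm.mul_apply]
      rw [this, hinv, ih]

noncomputable def kerEquiv (σ : Perm β) :
    (LinearMap.ker (Dmap σ)) ≃ₗ[ℚ] (Quotient (scSetoid σ) → ℚ) where
  toFun f := Quotient.lift (f : β → ℚ) (fun x y (h : σ.SameCycle x y) => by
    obtain ⟨i, hi⟩ := h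
    rw [← hi]
    exact (apply_zpow_eq (mem_ker_Dmap.1 f.2) i x).symm)
  map_add' f g := funext fun q => Quotient.inductionOn q (fun x => rfl)
  map_smul' c f := funext fun q => Quotient.inductionOn q (fun x => rfl)
  invFun g := ⟨g ∘ Quotient.mk _, mem_ker_Dmap.2 (fun x =>
    congrArg g (Quotient.sound (⟨-1, by simp⟩ : σ.SameCycle (σ x) x)))⟩
  left_inv f := Subtype.ext (funext fun x => rfl)
  right_inv g := funext fun q => Quotient.inductionOn q fun x => rfl

lemma finrank_ker_eq (σ : Perm β) :
    finrank ℚ (LinearMap.ker (Dmap σ)) = cycleCount σ := by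
  haveI : Fintype (Quotient (scSetoid σ)) := Fintype.ofFinite _
  rw [(kerEquiv σ).finrank_eq, Module.finrank_fintype_fun_eq_card,
    ← Nat.card_eq_fintype_card, card_quotient_eq]

lemma finrank_range_D (σ : Perm β) :
    finrank ℚ (LinearMap.range (Dmap σ)) + cycleCount σ = Fintype.card β := by
  have h := LinearMap.finrank_range_add_finrank_ker (Dmap σ)
  rw [finrank_ker_eq, Module.finrank_fintype_fun_eq_card] at h
  exact h

lemma rank_D_mul_le (σ τ : Perm β) :
    finrank ℚ (LinearMap.range (Dmap (σ * τ))) ≤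
      finrank ℚ (LinearMap.range (Dmap σ)) + finrank ℚ (LinearMap.range (Dmap τ)) := by
  have hD : Dmap (σ * τ) = (Lmap τ).comp (Dmap σ) + Dmap τ := by
    ext f x
    simp only [Dmap, Lmap, LinearMap.sub_apply, LinearMap.add_apply, LinearMap.comp_apply,
      LinearMap.funLeft_apply, LinearMap.id_apply, Pi.sub_apply, Pi.add_apply, Perm.mul_apply]
    ring
  have h1 : LinearMap.range (Dmap (σ * τ)) ≤
      LinearMap.range ((Lmap τ).comp (Dmap σ)) ⊔ LinearMap.range (Dmap τ) := by
    rw [hD]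
    rintro x ⟨f, rfl⟩
    exact Submodule.add_mem_sup ⟨f, rfl⟩ ⟨f, rfl⟩
  have h2 : finrank ℚ (LinearMap.range ((Lmap τ).comp (Dmap σ))) =
      finrank ℚ (LinearMap.range (Dmap σ)) := by
    rw [LinearMap.range_comp]
    exact LinearEquiv.finrank_map_eq (LinearEquiv.funCongrLeft ℚ ℚ τ) _
  calc finrank ℚ (LinearMap.range (Dmap (σ * τ)))
      ≤ finrank ℚ ↥(LinearMap.range ((Lmap τ).comp (Dmap σ)) ⊔ LinearMap.range (Dmap τ)) :=
          Submodule.finrank_mono h1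
    _ ≤ finrank ℚ (LinearMap.range ((Lmap τ).comp (Dmap σ))) +
          finrank ℚ (LinearMap.range (Dmap τ)) :=
        Submodule.finrank_add_le_finrank_add_finrank _ _
    _ = _ := by rw [h2]

lemma cycleCount_inv (σ : Perm β) : cycleCount σ⁻¹ = cycleCount σ := by
  simp [cycleCount, cycleType_inv]

/-- For any two permutations `α, γ` of `[n]`,
`|C(α∘γ) - C(γ)| ≤ n - C(α)`. -/
theorem abs_cycleCount_diff_le (n : ℕ) (α γ : Equiv.Perm (Fin n)) :
    |(cycleCount (α * γ) : ℤ) - (cycleCount γ : ℤ)| ≤ (n : ℤ) - cycleCount α := by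
  have hcard : Fintype.card (Fin n) = n := Fintype.card_fin n
  have h1 := finrank_range_D (α * γ)
  have h2 := finrank_range_D γ
  have h3 := finrank_range_D α
  have h4 := finrank_range_D α⁻¹
  have h5 := rank_D_mul_le α γ
  have h6 := rank_D_mul_le α⁻¹ (α * γ)
  rw [inv_mul_cancel_left] at h6
  rw [cycleCount_inv] at h4
  rw [hcard] at h1 h2 h3 h4
  rw [abs_le]
  omega
end

section
/- Lower bound for transposition distance: for any sequence s on [n] and any permutation γ of {0, 1, ..., n}, the transposition distance td(s) satisfies td(s) ≥ |C(p_t · s̄ · γ) - C(γ)| / 2, where s̄ = (0 a_1 ... a_n), p_t = (n n-1 ... 1 0), and C counts cycles. -/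
/-- One transposition move on sequences: swap two adjacent nonempty
contiguous blocks. -/
def TStep {α : Type*} (a b : List α) : Prop :=
  ∃ w x z u : List α, x ≠ [] ∧ z ≠ [] ∧
    a = w ++ x ++ z ++ u ∧ b = w ++ z ++ x ++ u

/-- The minimum number of `R`-moves transforming `s` into `t`. -/
noncomputable def sortDist {α : Type*} (R : List α → List α → Prop)
    (s t : List α) : ℕ :=
  sInf {m | ∃ g : ℕ → List α, g 0 = s ∧ g m = t ∧ ∀ i < m, R (g i) (g (i + 1))}

set_option linter.unusedSectionVars false

namespace TDLB

open Equiv Equiv.Perm List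

variable {α : Type*} [Fintype α] [DecidableEq α]

/-- The same-cycle setoid. -/
def scSetoid (σ : Perm α) : Setoid α :=
  ⟨σ.SameCycle, ⟨fun _ => SameCycle.refl σ _, fun h => h.symm, fun h h' => h.trans h'⟩⟩

instance scDec (σ : Perm α) : DecidableRel (scSetoid σ).r := fun _ _ =>
  (inferInstance : Decidable (σ.SameCycle _ _))

instance scQuotFintype (σ : Perm α) : Fintype (Quotient (scSetoid σ)) :=
  @Quotient.fintype _ _ (scSetoid σ) (scDec σ)

lemma sameCycle_eq_of_fixed {σ : Perm α} {a b : α} (h : σ.SameCycle a b) (ha : σ a = a) :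
    a = b := by
  obtain ⟨k, hk⟩ := h
  rw [zpow_apply_eq_self_of_apply_eq_self ha] at hk
  exact hk

abbrev sumType (σ : Perm α) :=
  {a : α // σ a = a} ⊕ {c : Perm α // c ∈ σ.cycleFactorsFinset}

private def toSum (σ : Perm α) (a : α) : sumType σ :=
  if h : σ a = a then Sum.inl ⟨a, h⟩
  else Sum.inr ⟨σ.cycleOf a, cycleOf_mem_cycleFactorsFinset_iff.mpr (mem_support.mpr h)⟩

lemma toSum_well (σ : Perm α) {a b : α} (h : σ.SameCycle a b) : toSum σ a = toSum σ b := by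
  by_cases ha : σ a = a
  · obtain rfl := sameCycle_eq_of_fixed h ha
    rfl
  · have hb : σ b ≠ b := fun hb => ha (by
      obtain rfl := sameCycle_eq_of_fixed h.symm hb; exact hb)
    simp only [toSum, dif_neg ha, dif_neg hb]
    exact congrArg _ (Subtype.ext h.cycleOf_eq)

lemma cycleCount_eq_card_quot (σ : Perm α) :
    cycleCount σ = Fintype.card (Quotient (scSetoid σ)) := by
  have hbij : Function.Bijective (Quotient.lift (toSum σ) (fun a b h => toSum_well σ h) :
      Quotient (scSetoid σ) → sumType σ) := by
    constructor
    · refine fun q1 q2 => Quotient.inductionOn₂ q1 q2 fun a b h => ?_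
      simp only [Quotient.lift_mk] at h
      refine Quotient.sound ?_
      unfold toSum at h
      by_cases ha : σ a = a <;> by_cases hb : σ b = b
      · rw [dif_pos ha, dif_pos hb] at h
        simp only [Sum.inl.injEq, Subtype.mk.injEq] at h
        exact h ▸ (scSetoid σ).refl a
      · rw [dif_pos ha, dif_neg hb] at h; exact absurd h (Sum.inl_ne_inr)
      · rw [dif_neg ha, dif_pos hb] at h; exact absurd h (Sum.inr_ne_inl)
      · rw [dif_neg ha, dif_neg hb] at h
        simp only [Sum.inr.injEq, Subtype.mk.injEq] at h
        have hco : σ.cycleOf a = σ.cycleOf b := h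
        have hbmem : b ∈ (σ.cycleOf b).support :=
          mem_support_cycleOf_iff.mpr ⟨SameCycle.refl σ b, mem_support.mpr hb⟩
        rw [← hco] at hbmem
        exact (mem_support_cycleOf_iff.mp hbmem).1
    · rintro (⟨a, ha⟩ | ⟨c, hc⟩)
      · exact ⟨Quotient.mk _ a, by simp [toSum, ha]⟩
      · obtain ⟨pt, hpt, -⟩ := (mem_cycleFactorsFinset_iff.mp hc).1
        have hpts : pt ∈ c.support := mem_support.mpr hpt
        have hσpt : σ pt ≠ pt := by
          rw [← (mem_cycleFactorsFinset_iff.mp hc).2 pt hpts]; exact hpt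
        refine ⟨Quotient.mk _ pt, ?_⟩
        simp only [Quotient.lift_mk, toSum, dif_neg hσpt]
        exact congrArg _ (Subtype.ext (cycle_is_cycleOf hpts hc).symm)
  have hcard := Fintype.card_of_bijective hbij
  have h1 : Fintype.card {a : α // σ a = a} = Fintype.card α - σ.support.card := by
    rw [Fintype.card_subtype]
    have := Finset.card_filter_add_card_filter_not
      (s := (Finset.univ : Finset α)) (p := fun a => σ a = a)
    have hsupp : σ.support = Finset.univ.filter (fun a => ¬ σ a = a) := by
      ext a; simp [Equiv.Perm.mem_support]
    rw [hsupp] at *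
    have hu : (Finset.univ : Finset α).card = Fintype.card α := Finset.card_univ
    omega
  have h2 : Fintype.card {c : Perm α // c ∈ σ.cycleFactorsFinset} = σ.cycleType.card :=
    by rw [Fintype.card_coe, cycleType_def, Multiset.card_map]; rfl
  have h3 : σ.cycleType.sum = σ.support.card := sum_cycleType σ
  have : Fintype.card (sumType σ) =
      Fintype.card {a : α // σ a = a} + Fintype.card {c : Perm α // c ∈ σ.cycleFactorsFinset} :=
    Fintype.card_sum
  rw [cycleCount, h3, hcard, this, h1, h2]

end TDLB


namespace TDLB

open Equiv Equiv.Perm List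

variable {α : Type*} [Fintype α] [DecidableEq α]

/-- The same-cycle relation of `σ` with the classes of `x` and `y` merged. -/
def swapRel (σ : Perm α) (x y : α) (a b : α) : Prop :=
  σ.SameCycle a b ∨ (σ.SameCycle a x ∧ σ.SameCycle y b) ∨ (σ.SameCycle a y ∧ σ.SameCycle x b)

lemma swapRel_trans (σ : Perm α) (x y : α) {a b c : α}
    (h1 : swapRel σ x y a b) (h2 : swapRel σ x y b c) : swapRel σ x y a c := by
  rcases h1 with h1 | ⟨h1, h1'⟩ | ⟨h1, h1'⟩ <;> rcases h2 with h2 | ⟨h2, h2'⟩ | ⟨h2, h2'⟩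
  · exact Or.inl (h1.trans h2)
  · exact Or.inr (Or.inl ⟨h1.trans h2, h2'⟩)
  · exact Or.inr (Or.inr ⟨h1.trans h2, h2'⟩)
  · exact Or.inr (Or.inl ⟨h1, h1'.trans h2⟩)
  · exact Or.inl (h1.trans (h2.symm.trans (h1'.symm.trans h2')))
  · exact Or.inl (h1.trans h2')
  · exact Or.inr (Or.inr ⟨h1, h1'.trans h2⟩)
  · exact Or.inl (h1.trans h2')
  · exact Or.inl (h1.trans (((h1'.trans h2).symm).trans h2'))

def swapSetoid (σ : Perm α) (x y : α) : Setoid α :=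
  ⟨swapRel σ x y,
    ⟨fun a => Or.inl (SameCycle.refl σ a),
     fun h => by
        rcases h with h | ⟨h, h'⟩ | ⟨h, h'⟩
        · exact Or.inl h.symm
        · exact Or.inr (Or.inr ⟨h'.symm, h.symm⟩)
        · exact Or.inr (Or.inl ⟨h'.symm, h.symm⟩),
     swapRel_trans σ x y⟩⟩

instance swapRelDec (σ : Perm α) (x y : α) : DecidableRel (swapSetoid σ x y).r := fun _ _ =>
  (inferInstance : Decidable (_ ∨ _))

instance swapQuotFintype (σ : Perm α) (x y : α) : Fintype (Quotient (swapSetoid σ x y)) :=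
  @Quotient.fintype _ _ (swapSetoid σ x y) (swapRelDec σ x y)

/-- Merging (at most) two classes loses at most one class. -/
lemma card_scQuot_le (σ : Perm α) (x y : α) [Nonempty α] :
    Fintype.card (Quotient (scSetoid σ)) ≤ Fintype.card (Quotient (swapSetoid σ x y)) + 1 := by
  classical
  set φ : Quotient (scSetoid σ) → Quotient (swapSetoid σ x y) :=
    Quotient.map' id (fun a b h => Or.inl h) with hφ
  have hφmk : ∀ a : α, φ (Quotient.mk (scSetoid σ) a) = Quotient.mk (swapSetoid σ x y) a :=
    fun a => rfl
  set qx := Quotient.mk (scSetoid σ) x with hqx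
  have hsub : (Finset.univ.filter (fun q => φ q = φ qx)) ⊆
      {qx, Quotient.mk (scSetoid σ) y} := by
    intro q hq
    simp only [Finset.mem_filter, Finset.mem_univ, true_and] at hq
    induction q using Quotient.inductionOn with
    | h a =>
      rw [hφmk, hφmk] at hq
      have h : swapRel σ x y a x := Quotient.exact' hq
      simp only [Finset.mem_insert, Finset.mem_singleton]
      rcases h with h | ⟨h, _⟩ | ⟨h, _⟩
      · exact Or.inl (Quotient.sound h)
      · exact Or.inl (Quotient.sound h)
      · exact Or.inr (Quotient.sound h)
  have h1 : (Finset.univ.filter (fun q => φ q = φ qx)).card ≤ 2 :=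
    le_trans (Finset.card_le_card hsub) (Finset.card_insert_le _ _ |>.trans (by simp))
  have h2 : (Finset.univ.filter (fun q => ¬ φ q = φ qx)).card ≤
      Fintype.card (Quotient (swapSetoid σ x y)) - 1 := by
    have := Finset.card_le_card_of_injOn φ
      (s := Finset.univ.filter (fun q => ¬ φ q = φ qx))
      (t := Finset.univ.erase (φ qx))
      (by intro q hq
          simp only [Finset.coe_filter, Set.mem_setOf_eq, Finset.mem_univ, true_and] at hq
          exact Finset.mem_erase.mpr ⟨hq, Finset.mem_univ _⟩)
      (by intro q1 hq1 q2 hq2 heq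
          simp only [Finset.coe_filter, Set.mem_setOf_eq, Finset.mem_univ, true_and] at hq1 hq2
          induction q1 using Quotient.inductionOn with
          | h a =>
          induction q2 using Quotient.inductionOn with
          | h b =>
            rw [hφmk, hφmk] at heq
            have h : swapRel σ x y a b := Quotient.exact' heq
            refine Quotient.sound ?_
            rcases h with h | ⟨h, _⟩ | ⟨h, _⟩
            · exact h
            · exact absurd (by rw [hφmk, hqx, hφmk]; exact Quotient.sound (Or.inl h)) hq1
            · refine absurd (?_ : φ _ = φ qx) hq1
              rw [hφmk, hqx, hφmk]
              exact Quotient.sound (Or.inr (Or.inr ⟨h, SameCycle.refl σ x⟩)))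
    rwa [Finset.card_erase_of_mem (Finset.mem_univ _), Finset.card_univ] at this
  have h3 := Finset.card_filter_add_card_filter_not
    (s := (Finset.univ : Finset (Quotient (scSetoid σ)))) (p := fun q => φ q = φ qx)
  haveI : Nonempty (Quotient (swapSetoid σ x y)) :=
    ⟨Quotient.mk (swapSetoid σ x y) (Classical.arbitrary α)⟩
  have h4 : 1 ≤ Fintype.card (Quotient (swapSetoid σ x y)) := Fintype.card_pos
  have h5 : (Finset.univ : Finset (Quotient (scSetoid σ))).card =
      Fintype.card (Quotient (scSetoid σ)) := Finset.card_univ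
  omega

lemma sameCycle_swap_mul (σ : Perm α) (x y a b : α)
    (h : (Equiv.swap x y * σ).SameCycle a b) : swapRel σ x y a b := by
  suffices H : ∀ i : ℕ, swapRel σ x y a (((Equiv.swap x y * σ) ^ i) a) by
    obtain ⟨i, -, rfl⟩ := h.exists_pow_eq'
    exact H i
  intro i
  induction i with
  | zero => rw [pow_zero, Perm.one_apply]; exact Or.inl (SameCycle.refl σ a)
  | succ n ih =>
    set c := ((Equiv.swap x y * σ) ^ n) a with hc
    have hstep : ((Equiv.swap x y * σ) ^ (n + 1)) a = Equiv.swap x y (σ c) := by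
      rw [pow_succ', mul_apply, mul_apply]
    rw [hstep]
    refine swapRel_trans σ x y ih ?_
    have hcsc : σ.SameCycle c (σ c) := ⟨1, by simp⟩
    by_cases h1 : σ c = x
    · rw [h1, swap_apply_left]
      exact Or.inr (Or.inl ⟨h1 ▸ hcsc, SameCycle.refl σ y⟩)
    · by_cases h2 : σ c = y
      · rw [h2, swap_apply_right]
        exact Or.inr (Or.inr ⟨h2 ▸ hcsc, SameCycle.refl σ x⟩)
      · rw [swap_apply_of_ne_of_ne h1 h2]
        exact Or.inl hcsc

lemma card_swapQuot_le (σ : Perm α) (x y : α) :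
    Fintype.card (Quotient (swapSetoid σ x y)) ≤
      Fintype.card (Quotient (scSetoid (Equiv.swap x y * σ))) := by
  have hsurj : Function.Surjective
      (Quotient.map' (id : α → α) (fun a b h => sameCycle_swap_mul σ x y a b h) :
        Quotient (scSetoid (Equiv.swap x y * σ)) → Quotient (swapSetoid σ x y)) := by
    intro q
    induction q using Quotient.inductionOn with
    | h a => exact ⟨Quotient.mk _ a, rfl⟩
  exact Fintype.card_le_of_surjective _ hsurj

lemma cycleCount_le_swap_mul (σ : Perm α) (x y : α) [Nonempty α] :
    cycleCount σ ≤ cycleCount (Equiv.swap x y * σ) + 1 := by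
  rw [cycleCount_eq_card_quot, cycleCount_eq_card_quot]
  exact le_trans (card_scQuot_le σ x y) (by
    have := card_swapQuot_le σ x y; omega)

lemma abs_cycleCount_swap_mul (σ : Perm α) (x y : α) [Nonempty α] :
    |(cycleCount (Equiv.swap x y * σ) : ℤ) - (cycleCount σ : ℤ)| ≤ 1 := by
  have h1 := cycleCount_le_swap_mul σ x y
  have h2 := cycleCount_le_swap_mul (Equiv.swap x y * σ) x y
  rw [← mul_assoc, Equiv.swap_mul_self, one_mul] at h2
  rw [abs_le]
  constructor <;> [skip; skip] <;> push_cast <;> omega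

end TDLB

namespace TDLB

open Equiv Equiv.Perm List

variable {α : Type*} [DecidableEq α]

lemma cycleCount_conj {β : Type*} [Fintype β] [DecidableEq β] (σ g : Perm β) :
    cycleCount (g * σ * g⁻¹) = cycleCount σ := by
  unfold cycleCount; rw [cycleType_conj]

lemma cycleCount_mul_comm {β : Type*} [Fintype β] [DecidableEq β] (a b : Perm β) :
    cycleCount (a * b) = cycleCount (b * a) := by
  have : b * a = b * (a * b) * b⁻¹ := by group
  rw [this, cycleCount_conj]

lemma fp_mid (l1 l2 l3 : List α) (hn : (l1 ++ (l2 ++ l3)).Nodup) {i : ℕ}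
    (hi : i + 1 < l2.length) :
    formPerm (l1 ++ (l2 ++ l3)) l2[i] = l2[i + 1] := by
  have hlen : l1.length + (i + 1) + 1 ≤ (l1 ++ (l2 ++ l3)).length := by
    simp only [length_append]; omega
  have h1 : (l1 ++ (l2 ++ l3))[l1.length + i]'(by omega) = l2[i] := by
    rw [getElem_append_right (by omega)]
    rw [getElem_append_left (by omega)]
    congr 1; omega
  have h2 : (l1 ++ (l2 ++ l3))[l1.length + i + 1]'(by omega) = l2[i + 1] := by
    rw [getElem_append_right (by omega)]
    rw [getElem_append_left (by omega)]
    congr 1; omega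
  rw [← h1, ← h2]
  exact formPerm_apply_lt_getElem _ hn _ (by omega)

lemma fp_suffix (l1 l2 : List α) (hn : (l1 ++ l2).Nodup) {i : ℕ}
    (hi : i + 1 < l2.length) :
    formPerm (l1 ++ l2) l2[i] = l2[i + 1] := by
  have h1 : (l1 ++ l2)[l1.length + i]'(by simp; omega) = l2[i] := by
    rw [getElem_append_right (by omega)]; congr 1; omega
  have h2 : (l1 ++ l2)[l1.length + i + 1]'(by simp; omega) = l2[i + 1] := by
    rw [getElem_append_right (by omega)]; congr 1; omega
  rw [← h1, ← h2]
  exact formPerm_apply_lt_getElem _ hn _ (by simp; omega)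

lemma fp_junc (l1 l2 l3 : List α) (hn : (l1 ++ (l2 ++ l3)).Nodup) (h2 : l2 ≠ [])
    (h3 : l3 ≠ []) :
    formPerm (l1 ++ (l2 ++ l3)) (l2.getLast h2) = l3.head h3 := by
  have hl2 : 0 < l2.length := length_pos_iff.mpr h2
  have hl3 : 0 < l3.length := length_pos_iff.mpr h3
  have h1 : (l1 ++ (l2 ++ l3))[l1.length + (l2.length - 1)]'(by simp; omega) =
      l2.getLast h2 := by
    rw [getElem_append_right (by omega), getElem_append_left (by omega),
      getLast_eq_getElem]
    congr 1; omega
  have hh : (l1 ++ (l2 ++ l3))[l1.length + (l2.length - 1) + 1]'(by simp; omega) =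
      l3.head h3 := by
    rw [getElem_append_right (by omega), getElem_append_right (by omega),
      head_eq_getElem_zero]
    congr 1; omega
  rw [← h1, ← hh]
  exact formPerm_apply_lt_getElem _ hn _ (by simp; omega)

lemma fp_last (l : List α) (hn : l.Nodup) (h : l ≠ []) :
    formPerm l (l.getLast h) = l.head h := by
  have hl : 0 < l.length := length_pos_iff.mpr h
  have h1 : l.getLast h = l[l.length - 1] := getLast_eq_getElem h
  have h2 : l.head h = l[0] := head_eq_getElem_zero h
  rw [h1, h2, formPerm_apply_getElem _ hn _ (by omega)]
  congr 1
  have : l.length - 1 + 1 = l.length := by omega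
  rw [this, Nat.mod_self]

end TDLB

namespace TDLB

open Equiv Equiv.Perm List

variable {α : Type*} [DecidableEq α]

lemma head_append_left' (l1 l2 : List α) (h1 : l1 ≠ []) (h : l1 ++ l2 ≠ []) :
    (l1 ++ l2).head h = l1.head h1 := by
  cases l1 with
  | nil => exact absurd rfl h1
  | cons a t => rfl

lemma formPerm_block_swap (b x z u : List α)
    (hc : b ≠ []) (hx : x ≠ []) (hz : z ≠ [])
    (hn : (b ++ (x ++ (z ++ u))).Nodup) :
    formPerm (b ++ (z ++ (x ++ u))) =
      formPerm (b ++ (x ++ (z ++ u))) * Equiv.swap (b.getLast hc) (x.getLast hx)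
        * Equiv.swap (x.getLast hx) (z.getLast hz) := by
  classical
  set p := b.getLast hc with hp
  set q := x.getLast hx with hq
  set s := z.getLast hz with hs
  -- Nodup of the rearranged list
  have hperm : (b ++ (z ++ (x ++ u))) ~ (b ++ (x ++ (z ++ u))) := by
    refine Perm.append_left b ?_
    calc z ++ (x ++ u) = (z ++ x) ++ u := (append_assoc _ _ _).symm
      _ ~ (x ++ z) ++ u := (perm_append_comm).append_right u
      _ = x ++ (z ++ u) := append_assoc _ _ _
  have hn' : (b ++ (z ++ (x ++ u))).Nodup := hperm.nodup_iff.mpr hn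
  obtain ⟨hnc, hnrest, hdisj1⟩ := nodup_append.mp hn
  obtain ⟨hnx, hnzu, hdisj2⟩ := nodup_append.mp hnrest
  obtain ⟨hnz, hnu, hdisj3⟩ := nodup_append.mp hnzu
  have hpmem : p ∈ b := getLast_mem hc
  have hqmem : q ∈ x := getLast_mem hx
  have hsmem : s ∈ z := getLast_mem hz
  -- memberships across blocks
  have hcx : ∀ a ∈ b, ∀ b ∈ x, a ≠ b := fun a ha b hb h =>
    hdisj1 _ ha _ (mem_append.mpr (Or.inl hb)) h
  have hcz : ∀ a ∈ b, ∀ b ∈ z, a ≠ b := fun a ha b hb h =>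
    hdisj1 _ ha _ (mem_append.mpr (Or.inr (mem_append.mpr (Or.inl hb)))) h
  have hcu : ∀ a ∈ b, ∀ b ∈ u, a ≠ b := fun a ha b hb h =>
    hdisj1 _ ha _ (mem_append.mpr (Or.inr (mem_append.mpr (Or.inr hb)))) h
  have hxz : ∀ a ∈ x, ∀ b ∈ z, a ≠ b := fun a ha b hb h =>
    hdisj2 _ ha _ (mem_append.mpr (Or.inl hb)) h
  have hxu : ∀ a ∈ x, ∀ b ∈ u, a ≠ b := fun a ha b hb h =>
    hdisj2 _ ha _ (mem_append.mpr (Or.inr hb)) h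
  have hzu : ∀ a ∈ z, ∀ b ∈ u, a ≠ b := fun a ha b hb h => hdisj3 _ ha _ hb h
  have hxune : x ++ u ≠ [] := fun h => hx (append_eq_nil_iff.mp h).1
  have hzune : z ++ u ≠ [] := fun h => hz (append_eq_nil_iff.mp h).1
  have hzxune : z ++ (x ++ u) ≠ [] := fun h => hz (append_eq_nil_iff.mp h).1
  have hxzune : x ++ (z ++ u) ≠ [] := fun h => hx (append_eq_nil_iff.mp h).1
  ext v
  simp only [Equiv.Perm.coe_mul, Function.comp_apply]
  by_cases hv : v ∈ b ++ (x ++ (z ++ u))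
  case neg =>
    simp only [mem_append] at hv
    push_neg at hv
    obtain ⟨hv1, hv2, hv3, hv4⟩ := hv
    have e1 : formPerm (b ++ (z ++ (x ++ u))) v = v :=
      formPerm_apply_of_notMem (by simp only [mem_append]; tauto)
    have e2 : formPerm (b ++ (x ++ (z ++ u))) v = v :=
      formPerm_apply_of_notMem (by simp only [mem_append]; tauto)
    have nvp : v ≠ p := fun h => hv1 (h ▸ hpmem)
    have nvq : v ≠ q := fun h => hv2 (h ▸ hqmem)
    have nvs : v ≠ s := fun h => hv3 (h ▸ hsmem)
    rw [swap_apply_of_ne_of_ne nvq nvs, swap_apply_of_ne_of_ne nvp nvq, e1, e2]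
  case pos =>
    simp only [mem_append] at hv
    rcases hv with hvc | hvx | hvz | hvu
    · -- v ∈ b
      obtain ⟨i, hilt, rfl⟩ := getElem_of_mem hvc
      have hvmem : b[i] ∈ b := getElem_mem hilt
      by_cases hic : i + 1 < b.length
      · rw [swap_apply_of_ne_of_ne (hcx _ hvmem _ hqmem) (hcz _ hvmem _ hsmem),
          swap_apply_of_ne_of_ne (fun h => by
            rw [hp, getLast_eq_getElem] at h
            exact absurd (hnc.getElem_inj_iff.mp h) (by omega)) (hcx _ hvmem _ hqmem)]
        have e1 : formPerm (b ++ (z ++ (x ++ u))) b[i] = b[i + 1] := by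
          have h0 := fp_mid [] b (z ++ (x ++ u)) hn' hic
          simpa only [nil_append] using h0
        have e2 : formPerm (b ++ (x ++ (z ++ u))) b[i] = b[i + 1] := by
          have h0 := fp_mid [] b (x ++ (z ++ u)) hn hic
          simpa only [nil_append] using h0
        rw [e1, e2]
      · -- v = p
        have hvp : b[i] = p := by
          rw [hp, getLast_eq_getElem]; congr 1; omega
        rw [hvp, swap_apply_of_ne_of_ne (hcx _ hpmem _ hqmem) (hcz _ hpmem _ hsmem),
          swap_apply_left]
        have e1 : formPerm (b ++ (z ++ (x ++ u))) (b.getLast hc) =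
            (z ++ (x ++ u)).head hzxune := by
          have h0 := fp_junc [] b (z ++ (x ++ u)) hn' hc hzxune
          simpa only [nil_append] using h0
        rw [e1, fp_junc b x (z ++ u) hn hx hzune,
          head_append_left' z (x ++ u) hz, head_append_left' z u hz]
    · -- v ∈ x
      obtain ⟨i, hilt, rfl⟩ := getElem_of_mem hvx
      have hvmem : x[i] ∈ x := getElem_mem hilt
      by_cases hic : i + 1 < x.length
      · rw [swap_apply_of_ne_of_ne (fun h => by
            rw [hq, getLast_eq_getElem] at h
            exact absurd (hnx.getElem_inj_iff.mp h) (by omega)) (hxz _ hvmem _ hsmem),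
          swap_apply_of_ne_of_ne (fun h => hcx _ hpmem _ hvmem h.symm) (fun h => by
            rw [hq, getLast_eq_getElem] at h
            exact absurd (hnx.getElem_inj_iff.mp h) (by omega))]
        rw [fp_mid b x (z ++ u) hn hic]
        have hassoc : b ++ (z ++ (x ++ u)) = (b ++ z) ++ (x ++ u) :=
          (append_assoc b z (x ++ u)).symm
        rw [hassoc]
        exact fp_mid (b ++ z) x u (hassoc ▸ hn') hic
      · -- v = q
        have hvq : x[i] = q := by
          rw [hq, getLast_eq_getElem]; congr 1; omega
        rw [hvq, swap_apply_left,
          swap_apply_of_ne_of_ne (fun h => hcz _ hpmem _ hsmem h.symm) (fun h =>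
            hxz _ hqmem _ hsmem h.symm)]
        -- LHS : formPerm L' q ; RHS : formPerm L s
        rcases eq_or_ne u [] with rfl | hu
        · simp only [append_nil]
          have hn2 : (b ++ (z ++ x)).Nodup := by simpa only [append_nil] using hn'
          have hn3 : (b ++ (x ++ z)).Nodup := by simpa only [append_nil] using hn
          have hqlast : q = (b ++ (z ++ x)).getLast (by simp [hc]) := by
            rw [getLast_append_of_ne_nil _ (show z ++ x ≠ [] by simp [hx]),
              getLast_append_of_ne_nil _ hx]
          have hslast : s = (b ++ (x ++ z)).getLast (by simp [hc]) := by
            rw [getLast_append_of_ne_nil _ (show x ++ z ≠ [] by simp [hx]),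
              getLast_append_of_ne_nil _ hz]
          rw [hqlast, fp_last _ hn2 (by simp [hc]), hslast, fp_last _ hn3 (by simp [hc]),
            head_append_left' b (z ++ x) hc, head_append_left' b (x ++ z) hc]
        · have hassoc : b ++ (z ++ (x ++ u)) = (b ++ z) ++ (x ++ u) :=
            (append_assoc b z (x ++ u)).symm
          have hassoc2 : b ++ (x ++ (z ++ u)) = (b ++ x) ++ (z ++ u) :=
            (append_assoc b x (z ++ u)).symm
          rw [hassoc, fp_junc (b ++ z) x u (hassoc ▸ hn') hx hu,
            hassoc2, fp_junc (b ++ x) z u (hassoc2 ▸ hn) hz hu]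
    · -- v ∈ z
      obtain ⟨i, hilt, rfl⟩ := getElem_of_mem hvz
      have hvmem : z[i] ∈ z := getElem_mem hilt
      by_cases hic : i + 1 < z.length
      · rw [swap_apply_of_ne_of_ne (fun h => hxz _ hqmem _ hvmem h.symm) (fun h => by
            rw [hs, getLast_eq_getElem] at h
            exact absurd (hnz.getElem_inj_iff.mp h) (by omega)),
          swap_apply_of_ne_of_ne (fun h => hcz _ hpmem _ hvmem h.symm) (fun h =>
            hxz _ hqmem _ hvmem h.symm)]
        rw [fp_mid b z (x ++ u) hn' hic]
        have hassoc2 : b ++ (x ++ (z ++ u)) = (b ++ x) ++ (z ++ u) :=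
          (append_assoc b x (z ++ u)).symm
        rw [hassoc2]
        exact (fp_mid (b ++ x) z u (hassoc2 ▸ hn) hic).symm
      · -- v = s
        have hvs : z[i] = s := by
          rw [hs, getLast_eq_getElem]; congr 1; omega
        rw [hvs, swap_apply_right, swap_apply_right, hp]
        have hcd : formPerm (b ++ (x ++ (z ++ u))) (b.getLast hc) =
            (x ++ (z ++ u)).head hxzune := by
          have h0 := fp_junc [] b (x ++ (z ++ u)) hn hc hxzune
          simpa only [nil_append] using h0
        rw [fp_junc b z (x ++ u) hn' hz hxune, hcd,
          head_append_left' x u hx, head_append_left' x (z ++ u) hx]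
    · -- v ∈ u
      obtain ⟨i, hilt, rfl⟩ := getElem_of_mem hvu
      have hvmem : u[i] ∈ u := getElem_mem hilt
      have hune : u ≠ [] := ne_nil_of_mem hvmem
      rw [swap_apply_of_ne_of_ne (fun h => hxu _ hqmem _ hvmem h.symm) (fun h =>
          hzu _ hsmem _ hvmem h.symm),
        swap_apply_of_ne_of_ne (fun h => hcu _ hpmem _ hvmem h.symm) (fun h =>
          hxu _ hqmem _ hvmem h.symm)]
      have hassocL : b ++ (z ++ (x ++ u)) = (b ++ (z ++ x)) ++ u := by
        simp [append_assoc]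
      have hassocR : b ++ (x ++ (z ++ u)) = (b ++ (x ++ z)) ++ u := by
        simp [append_assoc]
      by_cases hic : i + 1 < u.length
      · rw [hassocL, fp_suffix _ u (hassocL ▸ hn') hic,
          hassocR, fp_suffix _ u (hassocR ▸ hn) hic]
      · -- v = last of u = last of both lists
        have hvl : u[i] = u.getLast hune := by
          rw [getLast_eq_getElem]; congr 1; omega
        have h1 : u[i] = (b ++ (z ++ (x ++ u))).getLast (by simp [hc]) := by
          rw [getLast_append_of_ne_nil _ hzxune, getLast_append_of_ne_nil _ hxune,
            getLast_append_of_ne_nil _ hune, hvl]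
        have h2 : u[i] = (b ++ (x ++ (z ++ u))).getLast (by simp [hc]) := by
          rw [getLast_append_of_ne_nil _ hxzune, getLast_append_of_ne_nil _ hzune,
            getLast_append_of_ne_nil _ hune, hvl]
        have e1 : formPerm (b ++ (z ++ (x ++ u))) u[i] =
            (b ++ (z ++ (x ++ u))).head (by simp [hc]) := by
          rw [h1]; exact fp_last _ hn' _
        have e2 : formPerm (b ++ (x ++ (z ++ u))) u[i] =
            (b ++ (x ++ (z ++ u))).head (by simp [hc]) := by
          rw [h2]; exact fp_last _ hn _
        rw [e1, e2, head_append_left' b _ hc, head_append_left' b _ hc]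

end TDLB

namespace TDLB

open Equiv Equiv.Perm List

variable {α : Type*} [Fintype α] [DecidableEq α]

lemma two_swap_bound [Nonempty α] (ρ γ σ : Perm α) (p q s : α) :
    |(cycleCount (ρ * (σ * Equiv.swap p q * Equiv.swap q s) * γ) : ℤ) -
      (cycleCount (ρ * σ * γ) : ℤ)| ≤ 2 := by
  have c1 : cycleCount (ρ * (σ * Equiv.swap p q * Equiv.swap q s) * γ)
      = cycleCount (Equiv.swap q s * (γ * ρ * σ * Equiv.swap p q)) := by
    have c1a : cycleCount (ρ * (σ * Equiv.swap p q * Equiv.swap q s) * γ)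
        = cycleCount ((γ * ρ * σ * Equiv.swap p q) * Equiv.swap q s) := by
      rw [cycleCount_mul_comm]
      congr 1
    exact c1a.trans (cycleCount_mul_comm _ _)
  have c2 : cycleCount (γ * ρ * σ * Equiv.swap p q)
      = cycleCount (Equiv.swap p q * (γ * ρ * σ)) := cycleCount_mul_comm _ _
  have c3 : cycleCount (γ * ρ * σ) = cycleCount (ρ * σ * γ) := by
    rw [mul_assoc]
    exact cycleCount_mul_comm _ _
  have b1 := abs_cycleCount_swap_mul (γ * ρ * σ * Equiv.swap p q) q s
  have b2 := abs_cycleCount_swap_mul (γ * ρ * σ) p q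
  rw [abs_le] at b1 b2 ⊢
  obtain ⟨b1a, b1b⟩ := b1
  obtain ⟨b2a, b2b⟩ := b2
  constructor <;> [skip; skip] <;> rw [c1, ← c3] <;> omega

lemma tstep_perm {β : Type*} {a b : List β} (h : TStep a b) : a ~ b := by
  obtain ⟨w, x, z, u, hx, hz, rfl, rfl⟩ := h
  have h2 : (w ++ x) ++ z ~ (w ++ z) ++ x := by
    rw [append_assoc, append_assoc]
    exact Perm.append_left w perm_append_comm
  exact h2.append_right u

lemma step_bound [Nonempty α] (γ ρ : Perm α) (z0 : α) {a b : List α}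
    (h : TStep a b) (hnd : (z0 :: a).Nodup) :
    |(cycleCount (ρ * formPerm (z0 :: b) * γ) : ℤ) -
      (cycleCount (ρ * formPerm (z0 :: a) * γ) : ℤ)| ≤ 2 := by
  obtain ⟨w, x, z, u, hx, hz, rfl, rfl⟩ := h
  have ha : z0 :: (w ++ x ++ z ++ u) = (z0 :: w) ++ (x ++ (z ++ u)) := by
    simp [append_assoc]
  have hb : z0 :: (w ++ z ++ x ++ u) = (z0 :: w) ++ (z ++ (x ++ u)) := by
    simp [append_assoc]
  have hnd' : ((z0 :: w) ++ (x ++ (z ++ u))).Nodup := ha ▸ hnd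
  have hkey := formPerm_block_swap (z0 :: w) x z u (cons_ne_nil _ _) hx hz hnd'
  rw [ha, hb, hkey]
  exact two_swap_bound ρ γ _ _ _ _

lemma tstep_cons {β : Type*} (v : β) {a b : List β} (h : TStep a b) :
    TStep (v :: a) (v :: b) := by
  obtain ⟨w, x, z, u, hx, hz, rfl, rfl⟩ := h
  exact ⟨v :: w, x, z, u, hx, hz, rfl, rfl⟩

lemma perm_tsteps {β : Type*} {a b : List β} (h : a ~ b) :
    Relation.ReflTransGen TStep a b := by
  induction h with
  | nil => exact Relation.ReflTransGen.refl
  | cons v _ ih => exact Relation.ReflTransGen.lift _ (fun a b h => tstep_cons v h) _ _ ih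
  | swap x y l => exact Relation.ReflTransGen.single ⟨[], [y], [x], l,
      cons_ne_nil _ _, cons_ne_nil _ _, rfl, rfl⟩
  | trans _ _ ih1 ih2 => exact ih1.trans ih2

lemma chain_of_rtg {β : Type*} {R : List β → List β → Prop} {s t : List β}
    (h : Relation.ReflTransGen R s t) :
    ∃ m, ∃ g : ℕ → List β, g 0 = s ∧ g m = t ∧ ∀ i < m, R (g i) (g (i + 1)) := by
  induction h with
  | refl => exact ⟨0, fun _ => s, rfl, rfl, fun i hi => absurd hi (by omega)⟩
  | @tail b c _ hbc ih =>
    obtain ⟨m, g, h0, hm, hstep⟩ := ih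
    refine ⟨m + 1, fun i => if i ≤ m then g i else c, by simp [h0], by simp, ?_⟩
    intro i hi
    rcases lt_or_eq_of_le (Nat.lt_succ_iff.mp hi) with hlt | rfl
    · simp only [if_pos (by omega : i ≤ m), if_pos (by omega : i + 1 ≤ m)]
      exact hstep i hlt
    · simp only [if_pos le_rfl, if_neg (by omega : ¬ i + 1 ≤ i), hm]
      exact hbc

end TDLB

namespace TDLB

open Equiv Equiv.Perm List

lemma formPerm_map {α : Type*} [DecidableEq α] (f : Equiv.Perm α) (l : List α) :
    formPerm (l.map f) = f * formPerm l * f⁻¹ := by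
  induction l with
  | nil => simp
  | cons a l ih =>
    cases l with
    | nil => simp
    | cons b m =>
      simp only [map_cons, formPerm_cons_cons] at *
      rw [ih]
      have : Equiv.swap (f a) (f b) = f * Equiv.swap a b * f⁻¹ :=
        (Equiv.swap_apply_apply f a b)
      rw [this]
      group

variable {n : ℕ}

lemma list_t_eq (n : ℕ) :
    (0 : Fin (n + 1)) :: List.ofFn (fun i : Fin n => (Fin.ofNat (n + 1) ((i : ℕ) + 1 : ℕ))) =
      List.finRange (n + 1) := by
  apply List.ext_getElem
  · simp
  · intro i h1 h2
    match i with
    | 0 => simp [List.getElem_finRange]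
    | (j + 1) =>
      simp only [List.getElem_cons_succ, List.getElem_ofFn, List.getElem_finRange]
      apply Fin.ext
      simp only [Fin.val_ofNat]
      have hj : j + 1 < n + 1 := by simpa using h1
      rw [Nat.mod_eq_of_lt hj]
      simp [Fin.cast]

lemma formPerm_finRange (n : ℕ) :
    formPerm (List.finRange (n + 1)) = finRotate (n + 1) := by
  ext v
  have hv : v = (List.finRange (n + 1))[(v : ℕ)]'(by simp [v.isLt]) := by
    simp [List.getElem_finRange, Fin.cast]
  rw [finRotate_succ_apply]
  conv_lhs => rw [hv]
  rw [formPerm_apply_getElem _ (List.nodup_finRange _) _ (by simp [v.isLt])]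
  simp only [List.length_finRange, List.getElem_finRange]
  show ((Fin.cast _ ⟨((v : ℕ) + 1) % (n + 1), _⟩ : Fin (n + 1)) : ℕ) = ((v + 1 : Fin (n + 1)) : ℕ)
  simp only [Fin.coe_cast, Fin.val_add, Fin.val_one']
  rw [Nat.add_mod_mod]

lemma list_s_eq (f : Equiv.Perm (Fin (n + 1))) (hf0 : f 0 = 0) :
    (0 : Fin (n + 1)) :: List.ofFn (fun i : Fin n => f (Fin.ofNat (n + 1) ((i : ℕ) + 1 : ℕ))) =
      (List.finRange (n + 1)).map f := by
  have := congrArg (List.map f) (list_t_eq n)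
  rw [← this]
  simp only [map_cons, map_ofFn]
  rw [hf0]
  rfl

end TDLB

open Equiv Equiv.Perm List in
/-- Lower bound for the transposition distance.  Encode a sequence
`s = a_1 ⋯ a_n` on `[n]` by a permutation `f` of `{0, …, n}` with `f 0 = 0`
and `a_i = f i`, with `s̄ = (0 a_1 ⋯ a_n) = f * finRotate (n+1) * f⁻¹` and
`p_t = (n n-1 ⋯ 1 0) = (finRotate (n+1))⁻¹`.  Then for every permutation `γ`
of `{0, …, n}`, `td(s) ≥ |C(p_t · s̄ · γ) - C(γ)| / 2`. -/
theorem transposition_distance_lower_bound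
    (n : ℕ) (f : Equiv.Perm (Fin (n + 1))) (hf0 : f 0 = 0)
    (γ : Equiv.Perm (Fin (n + 1))) :
    |(cycleCount ((finRotate (n + 1))⁻¹ *
          (f * finRotate (n + 1) * f⁻¹) * γ) : ℤ) - (cycleCount γ : ℤ)|
      ≤ 2 * sortDist TStep
          (List.ofFn (fun i : Fin n => f (Fin.ofNat (n + 1) ((i : ℕ) + 1 : ℕ))))
          (List.ofFn (fun i : Fin n => (Fin.ofNat (n + 1) ((i : ℕ) + 1 : ℕ)))) := by
  classical
  set r := finRotate (n + 1) with hr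
  set s := List.ofFn (fun i : Fin n => f (Fin.ofNat (n + 1) ((i : ℕ) + 1 : ℕ))) with hs
  set t := List.ofFn (fun i : Fin n => (Fin.ofNat (n + 1) ((i : ℕ) + 1 : ℕ))) with ht
  have h0s : ((0 : Fin (n + 1)) :: s) = (List.finRange (n + 1)).map f := TDLB.list_s_eq f hf0
  have h0t : ((0 : Fin (n + 1)) :: t) = List.finRange (n + 1) := TDLB.list_t_eq n
  have hnds : ((0 : Fin (n + 1)) :: s).Nodup := by
    rw [h0s]; exact (List.nodup_finRange _).map f.injective
  have hndt : ((0 : Fin (n + 1)) :: t).Nodup := by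
    rw [h0t]; exact List.nodup_finRange _
  -- membership characterizations
  have hmems : ∀ v : Fin (n + 1), v ∈ s ↔ v ≠ 0 := by
    intro v
    have hall : v ∈ ((0 : Fin (n + 1)) :: s) := by
      rw [h0s]
      exact List.mem_map.mpr ⟨f⁻¹ v, List.mem_finRange _, f.apply_symm_apply v⟩
    have h0 : (0 : Fin (n + 1)) ∉ s := (List.nodup_cons.mp hnds).1
    constructor
    · intro hv hv0
      exact h0 (hv0 ▸ hv)
    · intro hv
      rcases List.mem_cons.mp hall with h | h
      · exact absurd h hv
      · exact h
  have hmemt : ∀ v : Fin (n + 1), v ∈ t ↔ v ≠ 0 := by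
    intro v
    have hall : v ∈ ((0 : Fin (n + 1)) :: t) := by rw [h0t]; exact List.mem_finRange _
    have h0 : (0 : Fin (n + 1)) ∉ t := (List.nodup_cons.mp hndt).1
    constructor
    · intro hv hv0
      exact h0 (hv0 ▸ hv)
    · intro hv
      rcases List.mem_cons.mp hall with h | h
      · exact absurd h hv
      · exact h
  have hperm : s ~ t := by
    refine List.perm_of_nodup_nodup_toFinset_eq (List.Nodup.of_cons hnds)
      (List.Nodup.of_cons hndt) ?_
    ext v
    simp only [List.mem_toFinset, hmems v, hmemt v]
  have hS : {m | ∃ g : ℕ → List (Fin (n + 1)),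
      g 0 = s ∧ g m = t ∧ ∀ i < m, TStep (g i) (g (i + 1))}.Nonempty :=
    TDLB.chain_of_rtg (TDLB.perm_tsteps hperm)
  have hmem := Nat.sInf_mem hS
  obtain ⟨g, hg0, hgm, hstep⟩ := hmem
  set m := sInf {m | ∃ g : ℕ → List (Fin (n + 1)),
      g 0 = s ∧ g m = t ∧ ∀ i < m, TStep (g i) (g (i + 1))} with hmdef
  have key : ∀ i, i ≤ m → ((0 : Fin (n + 1)) :: g i).Nodup ∧
      |(cycleCount (r⁻¹ * formPerm ((0 : Fin (n + 1)) :: g i) * γ) : ℤ) -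
        (cycleCount (r⁻¹ * formPerm ((0 : Fin (n + 1)) :: g 0) * γ) : ℤ)| ≤ 2 * (i : ℤ) := by
    intro i
    induction i with
    | zero => intro _; exact ⟨by rw [hg0]; exact hnds, by simp⟩
    | succ j ih =>
      intro hji
      obtain ⟨hnd, hbd⟩ := ih (Nat.le_of_succ_le hji)
      have hst := hstep j hji
      have hnd' : ((0 : Fin (n + 1)) :: g (j + 1)).Nodup :=
        (((TDLB.tstep_perm hst).cons (0 : Fin (n + 1))).nodup_iff).mp hnd
      have hsb := TDLB.step_bound γ (r⁻¹) (0 : Fin (n + 1)) hst hnd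
      refine ⟨hnd', ?_⟩
      have htri := abs_sub_le
        (cycleCount (r⁻¹ * formPerm ((0 : Fin (n + 1)) :: g (j + 1)) * γ) : ℤ)
        (cycleCount (r⁻¹ * formPerm ((0 : Fin (n + 1)) :: g j) * γ) : ℤ)
        (cycleCount (r⁻¹ * formPerm ((0 : Fin (n + 1)) :: g 0) * γ) : ℤ)
      push_cast
      push_cast at hbd hsb htri
      linarith
  obtain ⟨-, hfinal⟩ := key m le_rfl
  rw [hgm, hg0] at hfinal
  have ht2 : formPerm ((0 : Fin (n + 1)) :: t) = r := by
    rw [h0t]; exact TDLB.formPerm_finRange n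
  have hs2 : formPerm ((0 : Fin (n + 1)) :: s) = f * r * f⁻¹ := by
    rw [h0s, TDLB.formPerm_map, TDLB.formPerm_finRange]
  rw [ht2, hs2] at hfinal
  have hid : r⁻¹ * r * γ = γ := by group
  rw [hid] at hfinal
  rw [abs_sub_comm] at hfinal
  calc |(cycleCount (r⁻¹ * (f * r * f⁻¹) * γ) : ℤ) - (cycleCount γ : ℤ)|
      ≤ 2 * (m : ℤ) := hfinal
    _ = 2 * (sortDist TStep s t : ℤ) := by rw [hmdef]; rfl
end

section
/- Let p = (s̄, π) be a plane permutation on {0, 1, ..., n} whose diagonal is D_p = s̄ ∘ π⁻¹ = p_t⁻¹, where p_t = (n n-1 ... 1 0), and suppose s̄ ≠ (0 1 2 ... n). Then there exist positions i-1 < j < k-1 ≤ l in the listing of s̄ (with order <_{s̄}) such that π(s̄_{i-1}) = s̄_{k-1} and π(s̄_l) = s̄_j. -/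
/-- Let `p = (s̄, π)` be a plane permutation on `{0, 1, …, n}`, where
`s̄ = (s̄_0 s̄_1 ⋯ s̄_n)` is given by a listing `f` with `s̄_m = f m` and
`f 0 = 0` (so `s̄ = f * finRotate (n+1) * f⁻¹`), and whose diagonal is
`D_p = s̄ * π⁻¹ = p_t⁻¹` where `p_t = (n n-1 ⋯ 1 0) = (finRotate (n+1))⁻¹`;
hence `π = (finRotate (n+1))⁻¹ * s̄`.  If `s̄ ≠ (0 1 2 ⋯ n)`, then there are
positions `p < q < r ≤ t` (in the order `<_s̄` of the listing) with
`π (s̄_p) = s̄_r` and `π (s̄_t) = s̄_q`. -/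
theorem exists_good_blockInterchange
    (n : ℕ) (f : Equiv.Perm (Fin (n + 1))) (hf0 : f 0 = 0)
    (hs : f * finRotate (n + 1) * f⁻¹ ≠ finRotate (n + 1)) :
    ∃ p q r t : Fin (n + 1), p < q ∧ q < r ∧ r ≤ t ∧
      ((finRotate (n + 1))⁻¹ * (f * finRotate (n + 1) * f⁻¹)) (f p) = f r ∧
      ((finRotate (n + 1))⁻¹ * (f * finRotate (n + 1) * f⁻¹)) (f t) = f q := by
  classical
  -- reduce the goal's conditions to `f (a+1) = f b + 1`
  have key : ∀ a b : Fin (n+1), f (a + 1) = f b + 1 →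
      ((finRotate (n + 1))⁻¹ * (f * finRotate (n + 1) * f⁻¹)) (f a) = f b := by
    intro a b h
    simp only [Equiv.Perm.mul_apply,
      (fun y => Equiv.Perm.inv_eq_iff_eq.mpr rfl : ∀ y, f⁻¹ (f y) = y)]
    rw [finRotate_succ_apply, h, Equiv.Perm.inv_def, Equiv.symm_apply_eq,
        finRotate_succ_apply]
  have hex : ∃ a, f a ≠ a := by
    by_contra h
    push_neg at h
    apply hs
    have hf1 : f = 1 := Equiv.ext h
    rw [hf1]; simp
  set S : Finset (Fin (n+1)) := Finset.univ.filter (fun m => f m ≠ m) with hS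
  have hSne : S.Nonempty := ⟨hex.choose, by simp [hS, hex.choose_spec]⟩
  set x := S.min' hSne with hxdef
  have hfx_ne : f x ≠ x := by
    have := S.min'_mem hSne
    simpa [hS] using this
  have hmin : ∀ m : Fin (n+1), m < x → f m = m := by
    intro m hm
    by_contra hc
    exact absurd (S.min'_le m (by simp [hS, hc])) (not_le.mpr hm)
  have hx0 : x ≠ 0 := fun h => hfx_ne (by rw [h, hf0])
  have hxfx : x < f x := by
    rcases lt_or_gt_of_ne hfx_ne with h | h
    · exact absurd (f.injective (hmin (f x) h)) hfx_ne
    · exact h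
  have hfx0 : f x ≠ 0 := fun h => hx0 (f.injective (h.trans hf0.symm))
  have hxv : (x : ℕ) ≠ 0 := fun h => hx0 (Fin.ext h)
  have hfxv : ((f x : Fin (n+1)) : ℕ) ≠ 0 := fun h => hfx0 (Fin.ext h)
  set r := f⁻¹ (f x - 1) with hrdef
  have hfr : f r = f x - 1 := (Equiv.eq_symm_apply f).mp rfl
  have hfrv : ((f r : Fin (n+1)) : ℕ) = (f x : ℕ) - 1 := by
    rw [hfr, Fin.coe_sub_one, if_neg hfx0]
  have hxfxv : (x : ℕ) < (f x : ℕ) := hxfx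
  have hxr : x < r := by
    have hxle : x ≤ r := by
      by_contra h
      push_neg at h
      have h1 : f r = r := hmin r h
      have h2 : (r : ℕ) = (f x : ℕ) - 1 := by rw [← hfrv, h1]
      have h3 : (r : ℕ) < (x : ℕ) := h
      omega
    rcases lt_or_eq_of_le hxle with h | h
    · exact h
    · exfalso
      have : ((f r : Fin (n+1)) : ℕ) = (f x : ℕ) := by rw [← h]
      omega
  have hIne : (Finset.Ico x r).Nonempty := ⟨x, Finset.mem_Ico.mpr ⟨le_refl x, hxr⟩⟩
  obtain ⟨q, hqI, hqmax⟩ := Finset.exists_max_image (Finset.Ico x r)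
    (fun m => ((f m : Fin (n+1)) : ℕ)) hIne
  obtain ⟨hxq, hqr⟩ := Finset.mem_Ico.mp hqI
  have hfq : (f x : ℕ) ≤ (f q : ℕ) := hqmax x (Finset.mem_Ico.mpr ⟨le_refl x, hxr⟩)
  have hpq : x - 1 < q := by
    rw [Fin.lt_def, Fin.coe_sub_one, if_neg hx0]
    have : (x : ℕ) ≤ (q : ℕ) := hxq
    omega
  have hcond1 : f (x - 1 + 1) = f r + 1 := by
    have e1 : x - 1 + 1 = x := by abel
    have e2 : f x - 1 + 1 = f x := by abel
    rw [e1, hfr, e2]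
  rcases lt_or_eq_of_le (Fin.le_last (f q)) with hlt | hlast
  · -- f q < last
    set w := f⁻¹ (f q + 1) with hwdef
    have hfw : f w = f q + 1 := (Equiv.eq_symm_apply f).mp rfl
    have hfwv : ((f w : Fin (n+1)) : ℕ) = (f q : ℕ) + 1 := by
      rw [hfw, Fin.val_add_one, if_neg (ne_of_lt hlt)]
    have hxw : x ≤ w := by
      by_contra h
      push_neg at h
      have h1 : f w = w := hmin w h
      have h2 : (w : ℕ) < (x : ℕ) := h
      have h3 : (w : ℕ) = (f q : ℕ) + 1 := by rw [← hfwv, h1]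
      omega
    have hrw : r < w := by
      have hrle : r ≤ w := by
        by_contra h
        push_neg at h
        have := hqmax w (Finset.mem_Ico.mpr ⟨hxw, h⟩)
        omega
      rcases lt_or_eq_of_le hrle with h | h
      · exact h
      · exfalso
        have : ((f r : Fin (n+1)) : ℕ) = (f w : ℕ) := by rw [h]
        omega
    have hrwv : (r : ℕ) < (w : ℕ) := hrw
    have hw0 : w ≠ 0 := by
      intro h
      rw [h] at hrwv
      simp at hrwv
    have hrt : r ≤ w - 1 := by
      rw [Fin.le_def, Fin.coe_sub_one, if_neg hw0]
      omega
    have hcond2 : f (w - 1 + 1) = f q + 1 := by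
      have e1 : w - 1 + 1 = w := by abel
      rw [e1, hfw]
    exact ⟨x - 1, q, r, w - 1, hpq, hqr, hrt, key _ _ hcond1, key _ _ hcond2⟩
  · -- f q = last
    have hcond2 : f (Fin.last n + 1) = f q + 1 := by
      rw [Fin.last_add_one, hf0, hlast, Fin.last_add_one]
    exact ⟨x - 1, q, r, Fin.last n, hpq, hqr, Fin.le_last r, key _ _ hcond1,
      key _ _ hcond2⟩
end
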